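/- arXiv:1110.5736 — 6 statements merged into one kernel-verified Lean document; each statement's English description precedes it below -/
import Mathlib

section
/- For the cycle C_n on n ≥ 4 vertices, the rainbow connection number of C_n equals ⌈n/2⌉. -/
open SimpleGraph

/-- An edge-colouring is rainbow-connecting: any two vertices are joined by a rainbow path. -/
def IsRainbowConnecting {V : Type*} {α : Type*} (G : SimpleGraph V) (c : Sym2 V → α) : Prop :=
  ∀ u v : V, ∃ p : G.Walk u v, p.IsPath ∧ (p.edges.map c).Nodup

/-- The rainbow connection number: least number of colours of a rainbow-connecting colouring. -/
noncomputable def rc {V : Type*} (G : SimpleGraph V) : ℕ :=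
  sInf {k | ∃ c : Sym2 V → Fin k, IsRainbowConnecting G c}

namespace RCAux

open Fin.NatCast Fin.CommRing

lemma mod_sub {a n : ℕ} (h1 : n ≤ a) (h2 : a < 2*n) : a % n = a - n := by
  rw [Nat.mod_eq_sub_mod h1, Nat.mod_eq_of_lt (by omega)]

lemma dvd_eq_of_between {k m : ℕ} (hd : k ∣ m) (h1 : 0 < m) (h2 : m < 2*k) : m = k := by
  obtain ⟨c, rfl⟩ := hd
  rcases c with _ | _ | c
  · omega
  · omega
  · have h3 : k * 2 ≤ k * (c+1+1) := Nat.mul_le_mul_left _ (by omega)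
    omega

lemma colour_ne {n k a t1 t2 l : ℕ} (hn : 4 ≤ n) (hk : k = (n+1)/2)
    (h12 : t1 < t2) (h2l : t2 < l) (hl : l ≤ n/2) (ha : a < n) :
    ((a + t1) % n) % k ≠ ((a + t2) % n) % k := by
  intro h
  rcases Nat.lt_or_ge (a + t2) n with hc2 | hc2
  · rw [Nat.mod_eq_of_lt (show a + t1 < n by omega), Nat.mod_eq_of_lt hc2] at h
    have hdvd : k ∣ (a + t2) - (a + t1) := (Nat.modEq_iff_dvd' (by omega)).mp h
    have := Nat.le_of_dvd (by omega) hdvd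
    omega
  · rcases Nat.lt_or_ge (a + t1) n with hc1 | hc1
    · rw [Nat.mod_eq_of_lt hc1, mod_sub hc2 (show a + t2 < 2*n by omega)] at h
      have hdvd : k ∣ (a + t1) - (a + t2 - n) := (Nat.modEq_iff_dvd' (by omega)).mp h.symm
      have := dvd_eq_of_between hdvd (by omega) (by omega)
      omega
    · rw [mod_sub hc1 (show a + t1 < 2*n by omega), mod_sub hc2 (show a + t2 < 2*n by omega)] at h
      have hdvd : k ∣ (a + t2 - n) - (a + t1 - n) := (Nat.modEq_iff_dvd' (by omega)).mp h
      have := Nat.le_of_dvd (by omega) hdvd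
      omega

lemma mod_inj {n a t1 t2 : ℕ} (h12 : t1 < t2) (h2 : t2 < n) (ha : a < n) :
    (a + t1) % n ≠ (a + t2) % n := by
  intro h
  rcases Nat.lt_or_ge (a + t2) n with hc2 | hc2
  · rw [Nat.mod_eq_of_lt (show a + t1 < n by omega), Nat.mod_eq_of_lt hc2] at h; omega
  · rcases Nat.lt_or_ge (a + t1) n with hc1 | hc1
    · rw [Nat.mod_eq_of_lt hc1, mod_sub hc2 (show a + t2 < 2*n by omega)] at h; omega
    · rw [mod_sub hc1 (show a + t1 < 2*n by omega), mod_sub hc2 (show a + t2 < 2*n by omega)] at h; omega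

section CycleAux

variable {n : ℕ} [NeZero n]

lemma val_add_cast (i : Fin n) (t : ℕ) : (i + (t : Fin n)).val = (i.val + t) % n := by
  simp [Fin.add_def, Nat.add_mod_mod]

lemma adj_succ (hn : 4 ≤ n) (i : Fin n) : (cycleGraph n).Adj i (i + 1) := by
  rw [cycleGraph_adj']
  right
  have h1 : i + 1 - i = 1 := by ring
  rw [h1, Fin.val_one', Nat.mod_eq_of_lt (by omega)]

def upWalk (hn : 4 ≤ n) : (l : ℕ) → (i : Fin n) → (cycleGraph n).Walk i (i + (l : Fin n))
  | 0, i => Walk.nil.copy rfl (by simp)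
  | l + 1, i =>
    (Walk.cons (adj_succ hn i) (upWalk hn l (i + 1))).copy rfl (by push_cast; ring)

lemma upWalk_length (hn : 4 ≤ n) : ∀ (l : ℕ) (i : Fin n), (upWalk hn l i).length = l
  | 0, _ => by simp [upWalk]
  | l + 1, i => by simp [upWalk, upWalk_length hn l]

lemma upWalk_support (hn : 4 ≤ n) : ∀ (l : ℕ) (i : Fin n),
    (upWalk hn l i).support = (List.range (l+1)).map (fun t : ℕ => i + ((t : ℕ) : Fin n))
  | 0, i => by simp [upWalk, List.range_succ]
  | l + 1, i => by
    simp only [upWalk, Walk.support_copy, Walk.support_cons, upWalk_support hn l (i+1)]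
    conv_rhs => rw [List.range_succ_eq_map, List.map_cons, List.map_map]
    congr 1
    · simp
    apply List.map_congr_left
    intro t ht
    simp only [Function.comp_apply, Nat.succ_eq_add_one]
    push_cast
    ring

lemma upWalk_edges (hn : 4 ≤ n) : ∀ (l : ℕ) (i : Fin n),
    (upWalk hn l i).edges = (List.range l).map (fun t : ℕ => s(i + ((t : ℕ) : Fin n), i + ((t : ℕ) : Fin n) + 1))
  | 0, i => by simp [upWalk]
  | l + 1, i => by
    simp only [upWalk, Walk.edges_copy, Walk.edges_cons, upWalk_edges hn l (i+1)]
    conv_rhs => rw [List.range_succ_eq_map, List.map_cons, List.map_map]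
    congr 1
    · simp
    apply List.map_congr_left
    intro t ht
    simp only [Function.comp_apply, Nat.succ_eq_add_one]
    push_cast
    rw [show i + 1 + (t : Fin n) = i + ((t : Fin n) + 1) from by ring]

lemma upWalk_isPath (hn : 4 ≤ n) {l : ℕ} (hl : l < n) (i : Fin n) :
    (upWalk hn l i).IsPath := by
  rw [Walk.isPath_def, upWalk_support]
  refine (List.nodup_map_iff_inj_on List.nodup_range).mpr ?_
  intro x hx y hy hxy
  rw [List.mem_range] at hx hy
  by_contra hne
  have hv := congrArg Fin.val hxy
  rw [val_add_cast, val_add_cast] at hv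
  rcases Nat.lt_or_ge x y with hlt | hge
  · exact mod_inj hlt (by omega) i.isLt hv
  · exact mod_inj (show y < x by omega) (by omega) i.isLt hv.symm

def cycCol (n : ℕ) [NeZero n] (hn : 4 ≤ n) : Sym2 (Fin n) → Fin ((n+1)/2) :=
  Sym2.lift ⟨fun i j => ⟨(if j = i + 1 then i.val else if i = j + 1 then j.val else 0) % ((n+1)/2),
      Nat.mod_lt _ (by omega)⟩, by
    intro a b
    rcases eq_or_ne b (a+1) with h1 | h1
    · rcases eq_or_ne a (b+1) with h2 | h2
      · exfalso
        rw [h1] at h2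
        have h3 : ((2:ℕ) : Fin n) = 0 := by
          have h4 : (0 : Fin n) = 2 := by
            calc (0:Fin n) = a - a := by ring
            _ = (a + 1 + 1) - a := by rw [← h2]
            _ = 2 := by ring
          rw [Nat.cast_ofNat]
          exact h4.symm
        rw [Fin.natCast_eq_zero] at h3
        have := Nat.le_of_dvd (by omega) h3
        omega
      · subst h1
        simp [h2]
    · rcases eq_or_ne a (b+1) with h2 | h2
      · subst h2
        simp [h1]
      · simp [h1, h2]⟩

lemma cycCol_apply (hn : 4 ≤ n) (a : Fin n) :
    cycCol n hn s(a, a + 1) = ⟨a.val % ((n+1)/2), Nat.mod_lt _ (by omega)⟩ := by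
  rw [cycCol, Sym2.lift_mk]
  simp

lemma upWalk_rainbow (hn : 4 ≤ n) {l : ℕ} (hl : l ≤ n/2) (i : Fin n) :
    ((upWalk hn l i).edges.map (cycCol n hn)).Nodup := by
  rw [upWalk_edges, List.map_map]
  refine (List.nodup_map_iff_inj_on List.nodup_range).mpr ?_
  intro x hx y hy hxy
  rw [List.mem_range] at hx hy
  simp only [Function.comp_apply, cycCol_apply hn, Fin.mk.injEq] at hxy
  rw [val_add_cast, val_add_cast] at hxy
  by_contra hne
  rcases Nat.lt_or_ge x y with hlt | hge
  · exact colour_ne hn rfl hlt hy hl i.isLt hxy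
  · exact colour_ne hn rfl (show y < x by omega) hx hl i.isLt hxy.symm

end CycleAux

lemma upper (n : ℕ) (hn : 4 ≤ n) :
    ∃ c : Sym2 (Fin n) → Fin ((n+1)/2), IsRainbowConnecting (cycleGraph n) c := by
  haveI : NeZero n := ⟨by omega⟩
  refine ⟨cycCol n hn, fun u v => ?_⟩
  set d := (v - u).val with hd
  have hdn : d < n := (v - u).isLt
  rcases le_or_gt d (n/2) with hle | hgt
  · have hend : u + ((d : ℕ) : Fin n) = v := by
      rw [hd, Fin.cast_val_eq_self]
      ring
    refine ⟨(upWalk hn d u).copy rfl hend, ?_, ?_⟩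
    · rw [Walk.isPath_copy]
      exact upWalk_isPath hn (by omega) u
    · rw [Walk.edges_copy]
      exact upWalk_rainbow hn hle u
  · have hend : v + ((n - d : ℕ) : Fin n) = u := by
      have h1 : ((n - d : ℕ) : Fin n) = 0 - ((d : ℕ) : Fin n) := by
        rw [Nat.cast_sub hdn.le, Fin.natCast_self]
      rw [h1, hd, Fin.cast_val_eq_self]
      ring
    refine ⟨((upWalk hn (n - d) v).copy rfl hend).reverse, ?_, ?_⟩
    · apply Walk.IsPath.reverse
      rw [Walk.isPath_copy]
      exact upWalk_isPath hn (by omega) v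
    · rw [Walk.edges_reverse, List.map_reverse, List.nodup_reverse, Walk.edges_copy]
      exact upWalk_rainbow hn (by omega) v

lemma edges_eq {V : Type*} {G : SimpleGraph V} {u v : V} (p : G.Walk u v) :
    p.edges = (List.range p.length).map (fun j : ℕ => s(p.getVert j, p.getVert (j+1))) := by
  induction p with
  | nil => simp
  | cons h q ih =>
    rw [Walk.edges_cons, Walk.length_cons, List.range_succ_eq_map, List.map_cons, List.map_map, ih]
    congr 1
    simp [Walk.getVert_cons_succ]

section LowerAux

variable {n : ℕ} [NeZero n]

lemma path_dir (hn : 4 ≤ n) {u v : Fin n} (p : (cycleGraph n).Walk u v) (hp : p.IsPath) :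
    (∀ j, j ≤ p.length → p.getVert j = u + ((j : ℕ) : Fin n)) ∨
    (∀ j, j ≤ p.length → p.getVert j = u - ((j : ℕ) : Fin n)) := by
  induction p with
  | nil =>
    left
    intro j hj
    simp only [Walk.length_nil, Nat.le_zero] at hj
    subst hj
    simp
  | @cons a b v h q ih =>
    rw [Walk.cons_isPath_iff] at hp
    obtain ⟨hq, hnot⟩ := hp
    have hdir : b = a + 1 ∨ b = a - 1 := by
      rw [cycleGraph_adj'] at h
      rcases h with h | h
      · right
        have h2 : a - b = 1 := by
          apply Fin.ext
          rw [h, Fin.val_one', Nat.mod_eq_of_lt (by omega)]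
        have h3 : b = a - (a - b) := by ring
        rw [h3, h2]
      · left
        have h2 : b - a = 1 := by
          apply Fin.ext
          rw [h, Fin.val_one', Nat.mod_eq_of_lt (by omega)]
        have h3 : b = a + (b - a) := by ring
        rw [h3, h2]
    rcases Nat.eq_zero_or_pos q.length with hq0 | hq0
    · have hlen : (Walk.cons h q).length = 1 := by simp [hq0]
      rcases hdir with hb | hb
      · left
        intro j hj
        rw [hlen] at hj
        interval_cases j
        · simp
        · rw [Walk.getVert_cons_succ, Walk.getVert_zero, hb, Nat.cast_one]
      · right
        intro j hj
        rw [hlen] at hj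
        interval_cases j
        · simp
        · rw [Walk.getVert_cons_succ, Walk.getVert_zero, hb, Nat.cast_one]
    · rcases ih hq with hasc | hdesc
      · rcases hdir with hb | hb
        · left
          intro j hj
          cases j with
          | zero => simp
          | succ j =>
            rw [Walk.getVert_cons_succ, hasc j (by simpa using hj), hb]
            push_cast
            ring
        · exfalso
          apply hnot
          rw [Walk.mem_support_iff_exists_getVert]
          refine ⟨1, ?_, hq0⟩
          rw [hasc 1 hq0, hb, Nat.cast_one]
          ring
      · rcases hdir with hb | hb
        · exfalso
          apply hnot
          rw [Walk.mem_support_iff_exists_getVert]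
          refine ⟨1, ?_, hq0⟩
          rw [hdesc 1 hq0, hb, Nat.cast_one]
          ring
        · right
          intro j hj
          cases j with
          | zero => simp
          | succ j =>
            rw [Walk.getVert_cons_succ, hdesc j (by simpa using hj), hb]
            push_cast
            ring

lemma path_cases (hn : 4 ≤ n) {u v : Fin n} (p : (cycleGraph n).Walk u v) (hp : p.IsPath) :
    (p.length = (v - u).val ∧
      p.edges = (List.range p.length).map
        (fun j : ℕ => s(u + ((j : ℕ) : Fin n), u + ((j : ℕ) : Fin n) + 1)))
    ∨ p.length = (u - v).val := by
  have hlt : p.length < n := by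
    have := hp.length_lt
    simpa using this
  rcases path_dir hn p hp with hasc | hdesc
  · left
    have hv : v = u + ((p.length : ℕ) : Fin n) := by
      rw [← hasc p.length le_rfl, Walk.getVert_length]
    constructor
    · have hvu : v - u = ((p.length : ℕ) : Fin n) := by
        have h := congrArg (fun x => x - u) hv
        simpa using h
      rw [hvu, Fin.val_cast_of_lt hlt]
    · rw [edges_eq]
      apply List.map_congr_left
      intro j hj
      rw [List.mem_range] at hj
      rw [hasc j hj.le, hasc (j+1) hj,
        show (((j+1 : ℕ)) : Fin n) = ((j : ℕ) : Fin n) + 1 from by push_cast; ring,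
        ← add_assoc]
  · right
    have hv : u - v = ((p.length : ℕ) : Fin n) := by
      have h := congrArg (fun x => u - x) (hdesc p.length le_rfl)
      rw [Walk.getVert_length] at h
      try simp only at h
      rw [h]
      ring
    rw [hv, Fin.val_cast_of_lt hlt]

lemma rainbow_len {k : ℕ} {c : Sym2 (Fin n) → Fin k} {u v : Fin n} {p : (cycleGraph n).Walk u v}
    (h : (p.edges.map c).Nodup) : p.length ≤ k := by
  have := h.length_le_card
  simpa [Walk.length_edges] using this

end LowerAux

lemma lower (n : ℕ) (hn : 4 ≤ n) (k : ℕ) (c : Sym2 (Fin n) → Fin k)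
    (hc : IsRainbowConnecting (cycleGraph n) c) : (n+1)/2 ≤ k := by
  haveI : NeZero n := ⟨by omega⟩
  by_contra hlt
  push_neg at hlt
  have hk2 : n/2 ≤ k := by
    by_contra hk
    push_neg at hk
    obtain ⟨p, hp, hrain⟩ := hc 0 ⟨n/2, by omega⟩
    have hlen := rainbow_len hrain
    rcases path_cases hn p hp with ⟨h1, _⟩ | h1
    · have h2 : ((⟨n/2, by omega⟩ : Fin n) - 0).val = n/2 := by
        rw [sub_zero]
      omega
    · have h2 : ((0 : Fin n) - ⟨n/2, by omega⟩).val = n - n/2 := by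
        rw [Fin.sub_def]
        show (n - n/2 + 0) % n = n - n/2
        rw [Nat.mod_eq_of_lt (by omega)]
        omega
      omega
  have hkk : n = 2*k + 1 := by omega
  set g : Fin n → Fin k := fun j => c s(j, j + 1) with hg
  have claim1 : ∀ i : Fin n, ((List.range k).map (fun t : ℕ => g (i + ((t : ℕ) : Fin n)))).Nodup := by
    intro i
    obtain ⟨p, hp, hrain⟩ := hc i (i + ((k : ℕ) : Fin n))
    have hlen := rainbow_len hrain
    rcases path_cases hn p hp with ⟨h1, h2⟩ | h1
    · have hkval : ((i + ((k : ℕ) : Fin n)) - i).val = k := by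
        rw [show i + ((k : ℕ) : Fin n) - i = ((k : ℕ) : Fin n) from by ring,
          Fin.val_cast_of_lt (by omega)]
      rw [hkval] at h1
      have he : p.edges.map c = (List.range k).map (fun t : ℕ => g (i + ((t : ℕ) : Fin n))) := by
        rw [h2, h1, List.map_map]
        apply List.map_congr_left
        intro t ht
        simp only [Function.comp_apply, hg]
      rw [← he]
      exact hrain
    · exfalso
      have h2 : (i - (i + ((k : ℕ) : Fin n))).val = n - k := by
        rw [show i - (i + ((k : ℕ) : Fin n)) = (0 : Fin n) - ((k : ℕ) : Fin n) from by ring,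
          Fin.sub_def]
        show (n - ((k : ℕ) : Fin n).val + 0) % n = n - k
        rw [Fin.val_cast_of_lt (by omega), Nat.mod_eq_of_lt (by omega)]
        omega
      omega
  have hinj : ∀ i : Fin n, ∀ x, x < k → ∀ y, y < k →
      g (i + ((x : ℕ) : Fin n)) = g (i + ((y : ℕ) : Fin n)) → x = y := by
    intro i x hx y hy hxy
    exact (List.nodup_map_iff_inj_on (List.nodup_range (n := k))).mp (claim1 i) x
      (List.mem_range.mpr hx) y (List.mem_range.mpr hy) hxy
  have claim2 : ∀ i : Fin n, g (i + ((k : ℕ) : Fin n)) = g i := by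
    intro i
    have hcomp : g i ∈ (List.range k).map (fun t : ℕ => g ((i+1) + ((t : ℕ) : Fin n))) := by
      have hnd := claim1 (i+1)
      have hcard : ((List.range k).map (fun t : ℕ => g ((i+1) + ((t : ℕ) : Fin n)))).toFinset
          = Finset.univ := by
        apply Finset.eq_univ_of_card
        rw [List.toFinset_card_of_nodup hnd, List.length_map, List.length_range, Fintype.card_fin]
      rw [← List.mem_toFinset, hcard]
      exact Finset.mem_univ _
    obtain ⟨t, ht, hteq⟩ := List.mem_map.mp hcomp
    rw [List.mem_range] at ht
    rcases Nat.lt_or_ge (t+1) k with htk | htk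
    · exfalso
      have h1 : g (i + (((t+1 : ℕ)) : Fin n)) = g (i + ((0 : ℕ) : Fin n)) := by
        rw [show i + (((t+1 : ℕ)) : Fin n) = (i+1) + ((t : ℕ) : Fin n) from by push_cast; ring,
          hteq]
        simp
      have := hinj i (t+1) htk 0 (by omega) h1
      omega
    · have ht1 : t + 1 = k := by omega
      rw [← hteq,
        show i + ((k : ℕ) : Fin n) = (i+1) + ((t : ℕ) : Fin n) from by
          rw [← ht1]; push_cast; ring]
  have claim3 : ∀ m : ℕ, g (((m * k : ℕ)) : Fin n) = g (((0 : ℕ)) : Fin n) := by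
    intro m
    induction m with
    | zero => norm_num
    | succ m ih =>
      rw [show (((m+1) * k : ℕ) : Fin n) = (((m*k : ℕ)) : Fin n) + ((k : ℕ) : Fin n) from by
          push_cast; ring,
        claim2, ih]
  have claim4 : ∀ i : Fin n, g i = g 0 := by
    intro i
    obtain ⟨K', hK'⟩ : ∃ K', k = K' + 2 := ⟨k - 2, by omega⟩
    have key : (4 * i.val * k * k) % n = i.val := by
      have h1 : 4 * i.val * k * k = i.val + (i.val * (2*K' + 3)) * n := by
        generalize i.val = a
        rw [hkk, hK']
        ring
      rw [h1, Nat.add_mul_mod_self_right, Nat.mod_eq_of_lt i.isLt]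
    have hi : (((4 * i.val * k * k : ℕ)) : Fin n) = i := by
      apply Fin.ext
      rw [Fin.val_natCast, key]
    calc g i = g ((((4 * i.val * k) * k : ℕ)) : Fin n) := by rw [show ((4 * i.val * k) * k : ℕ) = (4 * i.val * k * k : ℕ) from by ring, hi]
    _ = g (((0 : ℕ)) : Fin n) := claim3 (4 * i.val * k)
    _ = g 0 := by norm_num
  have h0 : g ((0 : Fin n) + ((1 : ℕ) : Fin n)) = g ((0 : Fin n) + ((0 : ℕ) : Fin n)) := by
    simp only [Nat.cast_one, Nat.cast_zero, add_zero, zero_add]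
    exact claim4 1
  have := hinj 0 1 (by omega) 0 (by omega) h0
  omega

end RCAux

/-- For `n ≥ 4`, the rainbow connection number of the cycle `C_n` equals `⌈n/2⌉`. -/
theorem rc_cycleGraph (n : ℕ) (hn : 4 ≤ n) :
    rc (SimpleGraph.cycleGraph n) = (n + 1) / 2 := by
  apply le_antisymm
  · exact Nat.sInf_le (RCAux.upper n hn)
  · apply le_csInf ⟨(n+1)/2, RCAux.upper n hn⟩
    rintro k ⟨c, hc⟩
    exact RCAux.lower n hn k c hc
end

section
/- Let G be a 2-connected graph that contains an odd cycle and is not itself a cycle. Then G contains an even cycle. -/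
open SimpleGraph

/-- A graph is 2-connected: at least 3 vertices and deleting any vertex leaves it connected. -/
def TwoConnected {V : Type*} [Fintype V] (G : SimpleGraph V) : Prop :=
  3 ≤ Fintype.card V ∧ ∀ v : V, (G.induce {w : V | w ≠ v}).Connected

namespace EvenCycleAux

variable {V : Type*} {G : SimpleGraph V}

lemma end_mem_support_tail {u w : V} (p : G.Walk u w) (h : ¬ p.Nil) :
    w ∈ p.support.tail := by
  cases p with
  | nil => simp at h
  | cons h q => simpa using q.end_mem_support

lemma mem_support_iff_mem_tail {v : V} (c : G.Walk v v) (h : ¬ c.Nil) (z : V) :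
    z ∈ c.support ↔ z ∈ c.support.tail := by
  constructor
  · intro hz
    rw [c.support_eq_cons] at hz
    rcases List.mem_cons.mp hz with rfl | hz
    · exact end_mem_support_tail c h
    · exact hz
  · intro hz
    rw [c.support_eq_cons]
    exact List.mem_cons_of_mem _ hz

lemma length_rotate' [DecidableEq V] {v u : V} (c : G.Walk v v) (h : u ∈ c.support) :
    (c.rotate u h).length = c.length := by
  have h1 := congrArg Walk.length (c.take_spec h)
  rw [Walk.length_append] at h1
  unfold Walk.rotate
  rw [Walk.length_append]
  omega

lemma exists_firsthit {S : Set V} : ∀ {u t : V} (W : G.Walk u t), u ∉ S → t ∈ S →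
    ∃ (x : V) (Q : G.Walk u x), x ∈ S ∧ (∀ z ∈ Q.support, z ∈ W.support) ∧
      (∀ z ∈ Q.support, z ≠ x → z ∉ S) := by
  intro u t W
  induction W with
  | nil => intro hu ht; exact absurd ht hu
  | @cons u b t h W ih =>
    intro hu ht
    by_cases hb : b ∈ S
    · refine ⟨b, Walk.cons h Walk.nil, hb, ?_, ?_⟩
      · intro z hz
        simp only [Walk.support_cons, Walk.support_nil, List.mem_cons, List.mem_singleton] at hz
        simp only [Walk.support_cons, List.mem_cons]
        rcases hz with rfl | hz
        · exact Or.inl rfl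
        · rcases hz with rfl | hz
          · exact Or.inr W.start_mem_support
          · simp at hz
      · intro z hz hzb
        simp only [Walk.support_cons, Walk.support_nil, List.mem_cons, List.mem_singleton] at hz
        rcases hz with rfl | hz
        · exact hu
        · rcases hz with rfl | hz
          · exact absurd rfl hzb
          · simp at hz
    · obtain ⟨x, Q, hx, hsub, hprop⟩ := ih hb ht
      refine ⟨x, Walk.cons h Q, hx, ?_, ?_⟩
      · intro z hz
        simp only [Walk.support_cons, List.mem_cons] at hz ⊢
        rcases hz with rfl | hz
        · exact Or.inl rfl
        · exact Or.inr (hsub z hz)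
      · intro z hz hzx
        simp only [Walk.support_cons, List.mem_cons] at hz
        rcases hz with rfl | hz
        · exact hu
        · exact hprop z hz hzx

lemma exists_firsthit_path [DecidableEq V] {S : Set V} {u t : V} (W : G.Walk u t) (hu : u ∉ S) (ht : t ∈ S) :
    ∃ (x : V) (Q : G.Walk u x), x ∈ S ∧ Q.IsPath ∧ (∀ z ∈ Q.support, z ∈ W.support) ∧
      (∀ z ∈ Q.support, z ≠ x → z ∉ S) := by
  obtain ⟨x, Q, hx, hsub, hprop⟩ := exists_firsthit W hu ht
  exact ⟨x, Q.bypass, hx, Q.bypass_isPath, fun z hz => hsub z (Q.support_bypass_subset hz),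
    fun z hz => hprop z (Q.support_bypass_subset hz)⟩

lemma connected_of_twoConnected [Fintype V] (h2 : TwoConnected G) : G.Connected := by
  classical
  obtain ⟨hcard, hind⟩ := h2
  haveI hne : Nonempty V := Fintype.card_pos_iff.mp (by omega)
  refine ⟨?_⟩
  intro a b
  have hex : ∃ c : V, c ≠ a ∧ c ≠ b := by
    by_contra hc
    push_neg at hc
    have hsub : (Finset.univ : Finset V) ⊆ {a, b} := by
      intro c _
      simp only [Finset.mem_insert, Finset.mem_singleton]
      rcases eq_or_ne c a with h | h
      · exact Or.inl h
      · exact Or.inr (hc c h)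
    have h1 : Fintype.card V ≤ ({a, b} : Finset V).card := by
      rw [← Finset.card_univ]
      exact Finset.card_le_card hsub
    have h3 : ({a, b} : Finset V).card ≤ 2 := by
      apply le_trans (Finset.card_insert_le a {b})
      simp
    omega
  obtain ⟨c, hca, hcb⟩ := hex
  have hr : (G.induce {w : V | w ≠ c}).Reachable ⟨a, hca.symm⟩ ⟨b, hcb.symm⟩ :=
    (hind c).preconnected _ _
  simpa using hr.map (SimpleGraph.Embedding.induce {w : V | w ≠ c}).toHom

lemma edges_disjoint_of_support {a b c d : V} {p : G.Walk a b} {q : G.Walk c d} {s0 : V}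
    (h : ∀ z, z ∈ p.support → z ∈ q.support → z = s0) :
    ∀ e ∈ p.edges, e ∉ q.edges := by
  intro e hep heq
  revert hep heq
  induction e using Sym2.ind with
  | _ x y =>
    intro hep heq
    have hxp := p.fst_mem_support_of_mem_edges hep
    have hyp := p.snd_mem_support_of_mem_edges hep
    have hxq := q.fst_mem_support_of_mem_edges heq
    have hyq := q.snd_mem_support_of_mem_edges heq
    have hne : x ≠ y := (p.adj_of_mem_edges hep).ne
    exact hne ((h x hxp hxq).trans (h y hyp hyq).symm)

lemma ear_even [DecidableEq V] {v x y : V} (C : G.Walk v v) (hC : C.IsCycle)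
    (hCodd : Odd C.length) (hx : x ∈ C.support) (hy : y ∈ C.support) (hxy : x ≠ y)
    (P : G.Walk x y) (hP : P.IsPath)
    (hint : ∀ z ∈ P.support, z ≠ x → z ≠ y → z ∉ C.support)
    (hPe : ∀ e ∈ P.edges, e ∉ C.edges) :
    ∃ (w : V) (q : G.Walk w w), q.IsCycle ∧ Even q.length := by
  have hCnil : ¬ C.Nil := by
    rw [Walk.not_nil_iff_lt_length]
    have := hC.three_le_length
    omega
  set C' := C.rotate x hx with hC'def
  have hC' : C'.IsCycle := hC.rotate hx
  have hrotsup : C'.support.tail ~r C.support.tail := C.support_rotate x hx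
  have hC'len : C'.length = C.length := length_rotate' C hx
  have hC'nil : ¬ C'.Nil := by
    rw [Walk.not_nil_iff_lt_length, hC'len]
    have := hC.three_le_length
    omega
  have hmemC' : ∀ z, z ∈ C'.support ↔ z ∈ C.support := by
    intro z
    rw [mem_support_iff_mem_tail _ hC'nil, mem_support_iff_mem_tail _ hCnil,
      hrotsup.perm.mem_iff]
  have hmemE : ∀ e, e ∈ C'.edges ↔ e ∈ C.edges := fun e => (C.rotate_edges x hx).perm.mem_iff
  have hy' : y ∈ C'.support := (hmemC' y).mpr hy
  set T := C'.takeUntil y hy' with hTdef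
  set D := C'.dropUntil y hy' with hDdef
  have hspec : T.append D = C' := C'.take_spec hy'
  have hlen : T.length + D.length = C.length := by
    have h1 := congrArg Walk.length hspec
    rw [Walk.length_append] at h1
    omega
  have hsupT : T.support = x :: T.support.tail := T.support_eq_cons
  have htail : C'.support.tail = T.support.tail ++ D.support.tail := by
    rw [← hspec, Walk.support_append, hsupT]
    rfl
  have hnd : (T.support.tail ++ D.support.tail).Nodup := htail ▸ hC'.support_nodup
  rw [List.nodup_append] at hnd
  obtain ⟨hndT, hndD, hdisj⟩ := hnd
  have hTnil : ¬ T.Nil := Walk.not_nil_of_ne hxy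
  have hDnil : ¬ D.Nil := Walk.not_nil_of_ne (Ne.symm hxy)
  have hxD : x ∈ D.support.tail := end_mem_support_tail D hDnil
  have hyT : y ∈ T.support.tail := end_mem_support_tail T hTnil
  have hxT : x ∉ T.support.tail := fun hmem => hdisj _ hmem _ hxD rfl
  have hyD : y ∉ D.support.tail := fun hmem => hdisj _ hyT _ hmem rfl
  have hTpath : T.IsPath := by
    rw [Walk.isPath_def, hsupT]
    exact List.nodup_cons.mpr ⟨hxT, hndT⟩
  have hDpath : D.IsPath := by
    rw [Walk.isPath_def, D.support_eq_cons]
    exact List.nodup_cons.mpr ⟨hyD, hndD⟩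
  have hTsub : ∀ z ∈ T.support, z ∈ C.support := fun z hz =>
    (hmemC' z).mp (C'.support_takeUntil_subset hy' hz)
  have hDsub : ∀ z ∈ D.support, z ∈ C.support := fun z hz =>
    (hmemC' z).mp (C'.support_dropUntil_subset hy' hz)
  have hTe : ∀ e ∈ T.edges, e ∈ C.edges := fun e he =>
    (hmemE e).mp (C'.edges_takeUntil_subset hy' he)
  have hDe : ∀ e ∈ D.edges, e ∈ C.edges := fun e he =>
    (hmemE e).mp (C'.edges_dropUntil_subset hy' he)
  have hPlen : 0 < P.length := Walk.not_nil_iff_lt_length.mp (Walk.not_nil_of_ne hxy)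
  have hTlen : 0 < T.length := Walk.not_nil_iff_lt_length.mp hTnil
  have hDlen : 0 < D.length := Walk.not_nil_iff_lt_length.mp hDnil
  -- Cycle 1 : T ++ P.reverse
  have hc1 : (T.append P.reverse).IsCycle := by
    refine ⟨⟨⟨?_⟩, ?_⟩, ?_⟩
    · rw [Walk.edges_append, List.nodup_append]
      refine ⟨hTpath.isTrail.edges_nodup, hP.reverse.isTrail.edges_nodup, ?_⟩
      intro e heT _ heP rfl
      apply hPe e _ (hTe e heT)
      rwa [Walk.edges_reverse, List.mem_reverse] at heP
    · intro hcontra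
      have := congrArg Walk.length hcontra
      rw [Walk.length_append, Walk.length_reverse] at this
      simp only [Walk.length_nil] at this
      omega
    · have hts : (T.append P.reverse).support.tail
          = T.support.tail ++ P.reverse.support.tail := by
        rw [Walk.support_append, hsupT]
        rfl
      rw [hts, List.nodup_append]
      refine ⟨hndT, (List.tail_sublist _).nodup hP.reverse.support_nodup, ?_⟩
      intro z hzT _ hzP rfl
      have hzC : z ∈ C.support := hTsub z (by rw [hsupT]; exact List.mem_cons_of_mem _ hzT)
      have hzP' : z ∈ P.support := by
        have := List.tail_subset _ hzP
        rwa [Walk.support_reverse, List.mem_reverse] at this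
      have hzy : z ≠ y := by
        rintro rfl
        have hnd2 := hP.reverse.support_nodup
        rw [P.reverse.support_eq_cons] at hnd2
        exact (List.nodup_cons.mp hnd2).1 hzP
      have hzx : z ≠ x := fun h => hxT (h ▸ hzT)
      exact hint z hzP' hzx hzy hzC
  -- Cycle 2 : P ++ D
  have hc2 : (P.append D).IsCycle := by
    refine ⟨⟨⟨?_⟩, ?_⟩, ?_⟩
    · rw [Walk.edges_append, List.nodup_append]
      refine ⟨hP.isTrail.edges_nodup, hDpath.isTrail.edges_nodup, ?_⟩
      intro e heP _ heD rfl
      exact hPe e heP (hDe e heD)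
    · intro hcontra
      have := congrArg Walk.length hcontra
      rw [Walk.length_append] at this
      simp only [Walk.length_nil] at this
      omega
    · have hts : (P.append D).support.tail = P.support.tail ++ D.support.tail := by
        rw [Walk.support_append, P.support_eq_cons]
        rfl
      rw [hts, List.nodup_append]
      refine ⟨(List.tail_sublist _).nodup hP.support_nodup, hndD, ?_⟩
      intro z hzP _ hzD rfl
      have hzC : z ∈ C.support := hDsub z (by rw [D.support_eq_cons]; exact List.mem_cons_of_mem _ hzD)
      have hzP' : z ∈ P.support := List.tail_subset _ hzP
      have hzx : z ≠ x := by
        rintro rfl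
        have hnd2 := hP.support_nodup
        rw [P.support_eq_cons] at hnd2
        exact (List.nodup_cons.mp hnd2).1 hzP
      have hzy : z ≠ y := fun h => hyD (h ▸ hzD)
      exact hint z hzP' hzx hzy hzC
  have l1 : (T.append P.reverse).length = T.length + P.length := by
    rw [Walk.length_append, Walk.length_reverse]
  have l2 : (P.append D).length = P.length + D.length := Walk.length_append P D
  rcases Nat.even_or_odd (T.length + P.length) with he | ho
  · exact ⟨x, _, hc1, by rwa [l1]⟩
  · refine ⟨x, _, hc2, ?_⟩
    rw [l2, Nat.even_iff]
    rw [Nat.odd_iff] at ho hCodd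
    omega

end EvenCycleAux

open EvenCycleAux in
/-- A 2-connected graph containing an odd cycle which is not itself a cycle
contains an even cycle. -/
theorem even_cycle_of_odd_cycle_not_cycle {V : Type*} [Fintype V] (G : SimpleGraph V)
    (h2 : TwoConnected G)
    (hodd : ∃ (v : V) (p : G.Walk v v), p.IsCycle ∧ Odd p.length)
    (hnotcycle : ¬ ∃ (v : V) (p : G.Walk v v), p.IsCycle ∧ p.toSubgraph = ⊤) :
    ∃ (v : V) (p : G.Walk v v), p.IsCycle ∧ Even p.length := by
  classical
  obtain ⟨v, C, hC, hCodd⟩ := hodd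
  have hCnil : ¬ C.Nil := by
    rw [SimpleGraph.Walk.not_nil_iff_lt_length]
    have := hC.three_le_length
    omega
  by_cases hall : ∀ u : V, u ∈ C.support
  · -- chord case
    have hchord : ∃ a b : V, G.Adj a b ∧ s(a, b) ∉ C.edges := by
      by_contra hno
      push_neg at hno
      apply hnotcycle
      refine ⟨v, C, hC, ?_⟩
      apply SimpleGraph.Subgraph.ext
      · rw [SimpleGraph.Walk.verts_toSubgraph]
        ext w
        simp [hall w]
      · ext a b
        simp only [SimpleGraph.Subgraph.top_adj]
        constructor
        · exact fun h => h.adj_sub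
        · intro hab
          have hmem : s(a, b) ∈ C.edges := hno a b hab
          have : s(a, b) ∈ C.toSubgraph.edgeSet := by
            rw [SimpleGraph.Walk.edgeSet_toSubgraph]
            exact hmem
          exact SimpleGraph.Subgraph.mem_edgeSet.mp this
    obtain ⟨a, b, hab, habe⟩ := hchord
    refine ear_even C hC hCodd (hall a) (hall b) hab.ne (Walk.cons hab Walk.nil) ?_ ?_ ?_
    · simp [SimpleGraph.Walk.isPath_def, hab.ne]
    · intro z hz hza hzb
      simp only [SimpleGraph.Walk.support_cons, SimpleGraph.Walk.support_nil,
        List.mem_cons, List.mem_singleton] at hz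
      rcases hz with rfl | hz
      · exact absurd rfl hza
      · rcases hz with rfl | hz
        · exact absurd rfl hzb
        · simp at hz
    · intro e he
      simp only [SimpleGraph.Walk.edges_cons, SimpleGraph.Walk.edges_nil,
        List.mem_singleton] at he
      rwa [he]
  · -- vertex outside C
    push_neg at hall
    obtain ⟨u, hu⟩ := hall
    have hconn := connected_of_twoConnected h2
    obtain ⟨W0⟩ := hconn.preconnected u v
    have hvC : v ∈ C.support := C.start_mem_support
    obtain ⟨x, Q1, hxC, hQ1path, hQ1sub, hQ1prop⟩ :=
      exists_firsthit_path (S := {w | w ∈ C.support}) W0 hu hvC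
    have hux : u ≠ x := fun h => hu (h ▸ hxC)
    -- find c ∈ C.support with c ≠ x
    set C2 := C.rotate x hxC with hC2def
    have hC2 : C2.IsCycle := hC.rotate hxC
    have hC2nil : ¬ C2.Nil := by
      rw [SimpleGraph.Walk.not_nil_iff_lt_length, length_rotate' C hxC]
      have := hC.three_le_length
      omega
    obtain ⟨c, hadj, q, hq⟩ := SimpleGraph.Walk.not_nil_iff.mp hC2nil
    have hcx : c ≠ x := hadj.ne'
    have hcC2 : c ∈ C2.support.tail := by
      rw [hq]
      simp
    have hcC : c ∈ C.support := by
      have h1 := ((C.support_rotate x hxC).perm.mem_iff).mp hcC2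
      exact (mem_support_iff_mem_tail C hCnil c).mpr h1
    -- walk from u to c avoiding x
    have hr : (G.induce {w : V | w ≠ x}).Reachable ⟨u, hux⟩ ⟨c, hcx⟩ :=
      (h2.2 x).preconnected _ _
    obtain ⟨Wi⟩ := hr
    have hW1 : ∀ z ∈ (Wi.map (SimpleGraph.Embedding.induce {w : V | w ≠ x}).toHom
        : G.Walk u c).support, z ≠ x := by
      intro z hz
      rw [SimpleGraph.Walk.support_map] at hz
      obtain ⟨⟨z', hz'⟩, _, rfl⟩ := List.mem_map.mp hz
      exact hz'
    obtain ⟨y, Q2, hyC, hQ2path, hQ2sub, hQ2prop⟩ :=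
      exists_firsthit_path (S := {w | w ∈ C.support})
        (Wi.map (SimpleGraph.Embedding.induce {w : V | w ≠ x}).toHom : G.Walk u c) hu hcC
    have hQ2x : ∀ z ∈ Q2.support, z ≠ x := fun z hz => hW1 z (hQ2sub z hz)
    have hyx : y ≠ x := hQ2x y Q2.end_mem_support
    -- last intersection of Q2.reverse with Q1
    have huQ1 : u ∈ (fun s => s) Q1.support := Q1.start_mem_support
    have hyQ1 : y ∉ Q1.support := fun h => hQ1prop y h hyx hyC
    obtain ⟨w, R2, hwQ1, hR2path, hR2sub, hR2prop⟩ :=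
      exists_firsthit_path (S := {z | z ∈ Q1.support}) Q2.reverse hyQ1 huQ1
    have hR2subQ2 : ∀ z ∈ R2.support, z ∈ Q2.support := by
      intro z hz
      have := hR2sub z hz
      rwa [SimpleGraph.Walk.support_reverse, List.mem_reverse] at this
    have hwx : w ≠ x := hQ2x w (hR2subQ2 w R2.end_mem_support)
    set D1 := Q1.dropUntil w hwQ1 with hD1def
    have hD1path : D1.IsPath := hQ1path.dropUntil hwQ1
    have hD1sub : ∀ z ∈ D1.support, z ∈ Q1.support := fun z hz =>
      Q1.support_dropUntil_subset hwQ1 hz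
    set P := D1.reverse.append R2.reverse with hPdef
    have hPpath : P.IsPath := by
      rw [SimpleGraph.Walk.isPath_def, SimpleGraph.Walk.support_append, List.nodup_append]
      refine ⟨hD1path.reverse.support_nodup,
        (List.tail_sublist _).nodup hR2path.reverse.support_nodup, ?_⟩
      intro z hzD _ hzR rfl
      have hzD1 : z ∈ D1.support := by
        rwa [SimpleGraph.Walk.support_reverse, List.mem_reverse] at hzD
      have hzR2 : z ∈ R2.support := by
        have := List.tail_subset _ hzR
        rwa [SimpleGraph.Walk.support_reverse, List.mem_reverse] at this
      have hzw : z ≠ w := by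
        rintro rfl
        have hnd2 := hR2path.reverse.support_nodup
        rw [R2.reverse.support_eq_cons] at hnd2
        exact (List.nodup_cons.mp hnd2).1 hzR
      exact hR2prop z hzR2 hzw (hD1sub z hzD1)
    have hPsup : ∀ z ∈ P.support, z ∈ Q1.support ∨ z ∈ Q2.support := by
      intro z hz
      rw [SimpleGraph.Walk.support_append] at hz
      rcases List.mem_append.mp hz with hz | hz
      · left
        rw [SimpleGraph.Walk.support_reverse, List.mem_reverse] at hz
        exact hD1sub z hz
      · right
        have := List.tail_subset _ hz
        rw [SimpleGraph.Walk.support_reverse, List.mem_reverse] at this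
        exact hR2subQ2 z this
    have hQ1C : ∀ z, z ∈ Q1.support → z ∈ C.support → z = x := by
      intro z hz hzC
      by_contra h
      exact hQ1prop z hz h hzC
    have hQ2C : ∀ z, z ∈ Q2.support → z ∈ C.support → z = y := by
      intro z hz hzC
      by_contra h
      exact hQ2prop z hz h hzC
    have hint : ∀ z ∈ P.support, z ≠ x → z ≠ y → z ∉ C.support := by
      intro z hz hzx hzy hzC
      rcases hPsup z hz with h | h
      · exact hzx (hQ1C z h hzC)
      · exact hzy (hQ2C z h hzC)
    have hPe : ∀ e ∈ P.edges, e ∉ C.edges := by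
      intro e he
      rw [SimpleGraph.Walk.edges_append] at he
      rcases List.mem_append.mp he with he | he
      · rw [SimpleGraph.Walk.edges_reverse, List.mem_reverse] at he
        exact edges_disjoint_of_support hQ1C e (Q1.edges_dropUntil_subset hwQ1 he)
      · rw [SimpleGraph.Walk.edges_reverse, List.mem_reverse] at he
        exact edges_disjoint_of_support
          (fun z hz hzC => hQ2C z (hR2subQ2 z hz) hzC) e he
    exact ear_even C hC hCodd hxC hyC (Ne.symm hyx) P hPpath hint hPe
end

section
/- Let G be a 2-connected graph and H a connected subgraph of G with at least 2 vertices. If every H-path in G has even length, then the multigraph G/H obtained by contracting all edges of H (merging V(H) into a single vertex) is bipartite. -/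
open SimpleGraph

/-- `p` is a `K`-path: a path of positive length meeting the subgraph `K`
exactly in its two endvertices (and using no edge of `K`). -/
def IsHPathWalk {V : Type*} (G : SimpleGraph V) (K : G.Subgraph) {u v : V}
    (p : G.Walk u v) : Prop :=
  p.IsPath ∧ 0 < p.length ∧ u ∈ K.verts ∧ v ∈ K.verts ∧
  (∀ w ∈ p.support, w ≠ u → w ≠ v → w ∉ K.verts) ∧
  (∀ e ∈ p.edges, e ∉ K.edgeSet)

namespace CB
open Walk



variable {V : Type*}

section WalkLemmas
variable {G : SimpleGraph V}

lemma suffix_from_last (A : Set V) :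
    ∀ {a b : V} (p : G.Walk a b), (∃ w ∈ p.support, w ∈ A) →
    ∃ x, x ∈ A ∧ ∃ q : G.Walk x b, (∀ w ∈ q.support, w ∈ p.support) ∧
      (∀ w ∈ q.support.tail, w ∉ A) := by
  intro a b p
  induction p with
  | nil =>
    intro h
    obtain ⟨w, hw, hwA⟩ := h
    simp only [support_nil, List.mem_singleton] at hw
    subst hw
    exact ⟨w, hwA, Walk.nil, by simp, by simp⟩
  | cons h p ih =>
    intro hex
    by_cases hc : ∃ w ∈ p.support, w ∈ A
    · obtain ⟨x, hx, q, hsub, htail⟩ := ih hc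
      exact ⟨x, hx, q, fun w hw => by
        simp only [support_cons, List.mem_cons]; exact Or.inr (hsub w hw), htail⟩
    · obtain ⟨w, hw, hwA⟩ := hex
      simp only [support_cons, List.mem_cons] at hw
      rcases hw with rfl | hw
      · refine ⟨w, hwA, Walk.cons h p, fun x hx => hx, ?_⟩
        intro x hx hxA
        simp only [support_cons, List.tail_cons] at hx
        exact hc ⟨x, hx, hxA⟩
      · exact absurd ⟨w, hw, hwA⟩ hc

lemma prefix_to_first (B : Set V) :
    ∀ {a b : V} (p : G.Walk a b), (∃ w ∈ p.support, w ∈ B) →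
    ∃ y, y ∈ B ∧ ∃ q : G.Walk a y, (∀ w ∈ q.support, w ∈ p.support) ∧
      (∀ w ∈ q.support, w ∈ B → w = y) := by
  intro a b p
  induction p with
  | nil =>
    intro h
    obtain ⟨w, hw, hwB⟩ := h
    simp only [support_nil, List.mem_singleton] at hw
    subst hw
    exact ⟨w, hwB, Walk.nil, by simp, by simp⟩
  | @cons u v w h p ih =>
    intro hex
    by_cases ha : u ∈ B
    · exact ⟨u, ha, Walk.nil, by simp, by simp⟩
    · have hc : ∃ x ∈ p.support, x ∈ B := by
        obtain ⟨x, hx, hxB⟩ := hex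
        simp only [support_cons, List.mem_cons] at hx
        rcases hx with rfl | hx
        · exact absurd hxB ha
        · exact ⟨x, hx, hxB⟩
      obtain ⟨y, hy, q, hsub, hfirst⟩ := ih hc
      refine ⟨y, hy, Walk.cons h q, ?_, ?_⟩
      · intro x hx
        simp only [support_cons, List.mem_cons] at hx ⊢
        rcases hx with rfl | hx
        · exact Or.inl rfl
        · exact Or.inr (hsub x hx)
      · intro x hx hxB
        simp only [support_cons, List.mem_cons] at hx
        rcases hx with rfl | hx
        · exact absurd hxB ha
        · exact hfirst x hx hxB

/-- Trim a walk from `A` to `B` into a path meeting `A` only at its start and `B`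
only at its end. -/
lemma trim (A B : Set V) {a b : V} (p : G.Walk a b) (ha : a ∈ A) (hb : b ∈ B) :
    ∃ x, x ∈ A ∧ ∃ y, y ∈ B ∧ ∃ q : G.Walk x y, q.IsPath ∧
      (∀ w ∈ q.support, w ∈ p.support) ∧
      (∀ w ∈ q.support, w ∈ A → w = x) ∧
      (∀ w ∈ q.support, w ∈ B → w = y) := by
  classical
  obtain ⟨x, hx, q1, hsub1, htail1⟩ := suffix_from_last A p ⟨a, p.start_mem_support, ha⟩
  obtain ⟨y, hy, q2, hsub2, hfirst2⟩ := prefix_to_first B q1 ⟨b, q1.end_mem_support, hb⟩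
  refine ⟨x, hx, y, hy, q2.bypass, q2.bypass_isPath, ?_, ?_, ?_⟩
  · exact fun w hw => hsub1 w (hsub2 w (q2.support_bypass_subset hw))
  · intro w hw hwA
    have hw2 : w ∈ q2.support := q2.support_bypass_subset hw
    have hw1 : w ∈ q1.support := hsub2 w hw2
    rw [q1.support_eq_cons] at hw1
    rcases List.mem_cons.mp hw1 with h' | hw1
    · exact h'
    · exact absurd hwA (htail1 w hw1)
  · exact fun w hw hwB => hfirst2 w (q2.support_bypass_subset hw) hwB

end WalkLemmas




variable {V : Type*} {G : SimpleGraph V}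

lemma support_decomp {a b : V} (p : G.Walk a b) :
    p.support = p.support.dropLast ++ [b] := by
  have h0 := support_eq_cons p.reverse
  obtain ⟨t, ht⟩ : ∃ t, p.reverse.support.tail = t := ⟨_, rfl⟩
  rw [ht, support_reverse] at h0
  have h2 : p.support = t.reverse ++ [b] := by
    have := congrArg List.reverse h0
    simpa using this
  rw [h2, List.dropLast_concat]

lemma start_not_mem_tail {a b : V} {p : G.Walk a b} (hp : p.IsPath) :
    a ∉ p.support.tail := by
  have := hp.support_nodup
  rw [support_eq_cons] at this
  exact (List.nodup_cons.mp this).1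

lemma end_mem_closed_tail {u : V} (p : G.Walk u u) (h : 1 ≤ p.length) :
    u ∈ p.support.tail := by
  cases p with
  | nil => simp at h
  | cons h q => simpa using q.end_mem_support

lemma mem_closed_support_iff_tail {u : V} (p : G.Walk u u) (h : 1 ≤ p.length) (w : V) :
    w ∈ p.support ↔ w ∈ p.support.tail := by
  rw [support_eq_cons]
  simp only [List.mem_cons]
  constructor
  · rintro (rfl | hw)
    · exact end_mem_closed_tail p h
    · exact hw
  · exact Or.inr

lemma length_rotate [DecidableEq V] {u x : V} (c : G.Walk u u) (hx : x ∈ c.support) :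
    (c.rotate _ hx).length = c.length := by
  unfold Walk.rotate
  rw [length_append, add_comm, ← length_append, take_spec]

lemma edges_not_in (H : G.Subgraph) {a b : V} (p : G.Walk a b) (x₀ : V)
    (h : ∀ w ∈ p.support, w ∈ H.verts → w = x₀) : ∀ e ∈ p.edges, e ∉ H.edgeSet := by
  intro e he heH
  induction e with
  | _ u v =>
    rw [Subgraph.mem_edgeSet] at heH
    have hu : u ∈ p.support := p.fst_mem_support_of_mem_edges he
    have hv : v ∈ p.support := p.snd_mem_support_of_mem_edges he
    have h1 : u = x₀ := h u hu (H.edge_vert heH)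
    have h2 : v = x₀ := h v hv (H.edge_vert heH.symm)
    exact (H.adj_sub heH).ne (h1.trans h2.symm)

lemma split_closed {u : V} (W : G.Walk u u) (hnod : W.support.tail.Nodup)
    {c : V} (hc : c ∈ W.support) (hne : c ≠ u) :
    ∃ (t : G.Walk u c) (d : G.Walk c u),
      t.IsPath ∧ d.IsPath ∧ 1 ≤ t.length ∧ 1 ≤ d.length ∧ t.length + d.length = W.length ∧
      W.edges = t.edges ++ d.edges ∧
      (∀ w ∈ t.support, w ∈ W.support) ∧ (∀ w ∈ d.support, w ∈ W.support) := by
  classical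
  refine ⟨W.takeUntil c hc, W.dropUntil c hc, ?_⟩
  set t := W.takeUntil c hc with ht
  set d := W.dropUntil c hc with hd
  have hspec : t.append d = W := W.take_spec hc
  have hlen : t.length + d.length = W.length := by
    rw [← hspec, length_append]
  have hedge : W.edges = t.edges ++ d.edges := by
    rw [← hspec, edges_append]
  have hsup : t.support ++ d.support.tail = W.support := by
    rw [← hspec, support_append]
  have htail : W.support.tail = t.support.tail ++ d.support.tail := by
    rw [← hspec, tail_support_append]
  have h1 : 1 ≤ t.length := by
    rcases Nat.eq_zero_or_pos t.length with h0 | h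
    · exact absurd (eq_of_length_eq_zero h0).symm hne
    · exact h
  have h2 : 1 ≤ d.length := by
    rcases Nat.eq_zero_or_pos d.length with h0 | h
    · exact absurd (eq_of_length_eq_zero h0) hne
    · exact h
  rw [htail] at hnod
  have hnt := (List.nodup_append'.mp hnod).1
  have hnd := (List.nodup_append'.mp hnod).2.1
  have hdisj := (List.nodup_append'.mp hnod).2.2
  have hct : c ∈ t.support.tail := end_mem_tail_support_of_ne (Ne.symm hne) t
  have hud : u ∈ d.support.tail := end_mem_tail_support_of_ne hne d
  have htp : t.IsPath := by
    rw [isPath_def, support_eq_cons, List.nodup_cons]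
    exact ⟨fun hmem => hdisj hmem hud, hnt⟩
  have hdp : d.IsPath := by
    rw [isPath_def, support_eq_cons, List.nodup_cons]
    exact ⟨fun hmem => hdisj hct hmem, hnd⟩
  refine ⟨htp, hdp, h1, h2, hlen, hedge, ?_, ?_⟩
  · intro w hw; rw [← hsup]; exact List.mem_append_left _ hw
  · intro w hw
    rw [← hsup]
    rw [support_eq_cons] at hw
    rcases List.mem_cons.mp hw with rfl | hw
    · exact List.mem_append_left _ (List.mem_of_mem_tail hct)
    · exact List.mem_append_right _ hw

/-- From any odd closed walk we can extract a closed walk with no repeated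
interior vertices and odd length. -/
lemma exists_odd_closed (n : ℕ) : ∀ {u : V} (w : G.Walk u u), w.length = n → Odd n →
    ∃ (v : V) (c : G.Walk v v), c.support.tail.Nodup ∧ Odd c.length ∧ 1 ≤ c.length := by
  induction n using Nat.strong_induction_on with
  | _ n ih =>
  intro u w hlen hodd
  classical
  by_cases hnod : w.support.tail.Nodup
  · refine ⟨u, w, hnod, hlen ▸ hodd, ?_⟩
    rw [hlen]
    rcases hodd with ⟨k, hk⟩
    omega
  · obtain ⟨x, hdup⟩ := List.exists_duplicate_iff_not_nodup.mpr hnod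
    have hcount : 2 ≤ w.support.tail.count x := List.duplicate_iff_two_le_count.mp hdup
    have hx : x ∈ w.support := List.mem_of_mem_tail hdup.mem
    have hlen2 : (w.rotate _ hx).length = n := by rw [length_rotate]; exact hlen
    have hcount2 : 2 ≤ (w.rotate _ hx).support.tail.count x := by
      rw [((w.support_rotate _ hx).perm.count_eq x)]
      exact hcount
    cases hw2 : w.rotate _ hx with
    | nil =>
      rw [hw2] at hlen2
      simp at hlen2
      rcases hodd with ⟨k, hk⟩
      omega
    | @cons _ y _ h r =>
      rw [hw2] at hlen2 hcount2
      simp only [support_cons, List.tail_cons] at hcount2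
      have hxr : x ∈ r.support := by
        have : 0 < r.support.count x := by omega
        exact List.count_pos_iff.mp this
      have hct : (r.takeUntil x hxr).support.count x = 1 :=
        count_support_takeUntil_eq_one r hxr
      have hrsup : (r.takeUntil x hxr).support ++ (r.dropUntil x hxr).support.tail
          = r.support := by rw [← support_append, take_spec]
      have hcountd : 1 ≤ (r.dropUntil x hxr).support.tail.count x := by
        have := congrArg (List.count x) hrsup
        rw [List.count_append] at this
        omega
      have hdlen : 1 ≤ (r.dropUntil x hxr).length := by
        by_contra hcon
        have h0 : (r.dropUntil x hxr).length = 0 := by omega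
        have : (r.dropUntil x hxr).support.tail.length = 0 := by
          have := (r.dropUntil x hxr).length_support
          simp [List.length_tail, this, h0]
        rw [List.length_eq_zero_iff.mp this] at hcountd
        simp at hcountd
      have hsum : 1 + (r.takeUntil x hxr).length + (r.dropUntil x hxr).length = n := by
        have := congrArg Walk.length (r.take_spec hxr)
        rw [length_append] at this
        simp only [length_cons] at hlen2
        omega
      rcases Nat.even_or_odd (1 + (r.takeUntil x hxr).length) with he | ho
      · have hd : Odd (r.dropUntil x hxr).length := by
          rcases hodd with ⟨k, hk⟩
          rcases he with ⟨m, hm⟩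
          exact ⟨k - m, by omega⟩
        exact ih _ (by omega) (r.dropUntil x hxr) rfl hd
      · have hlt : 1 + (r.takeUntil x hxr).length < n := by omega
        exact ih _ hlt (Walk.cons h (r.takeUntil x hxr)) (by simp [length_cons]; omega) ho




variable {V : Type*} {G : SimpleGraph V}

lemma dropLast_support_cons {a c b : V} (h : G.Adj a c) (p : G.Walk c b) :
    (Walk.cons h p).support.dropLast = a :: p.support.dropLast := by
  rw [support_cons, support_eq_cons p]
  rw [List.dropLast_cons₂, ← support_eq_cons]

section Conn
variable [Fintype V]

lemma conn_del (h2 : TwoConnected G) (v : V) {x y : V} (hx : x ≠ v) (hy : y ≠ v) :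
    ∃ p : G.Walk x y, v ∉ p.support := by
  have hc := h2.2 v
  have hr := hc.preconnected ⟨x, hx⟩ ⟨y, hy⟩
  obtain ⟨p₀⟩ := hr
  let f : (G.induce {w : V | w ≠ v}) →g G := ⟨Subtype.val, fun h => h⟩
  refine ⟨p₀.map f, ?_⟩
  intro hv
  rw [Walk.support_map, List.mem_map] at hv
  obtain ⟨w, _, hw⟩ := hv
  exact w.2 hw

lemma conn_of_two (h2 : TwoConnected G) : G.Connected := by
  classical
  have hcard := h2.1
  have hne : Nonempty V := Fintype.card_pos_iff.mp (by omega)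
  rw [connected_iff]
  refine ⟨fun x y => ?_, hne⟩
  by_cases hxy : x = y
  · subst hxy; exact Reachable.refl x
  · have : ∃ v : V, v ≠ x ∧ v ≠ y := by
      by_contra hcon
      push_neg at hcon
      have hsub : (Finset.univ : Finset V) ⊆ ({x, y} : Finset V) := by
        intro v _
        simp only [Finset.mem_insert, Finset.mem_singleton]
        rcases Classical.em (v = x) with rfl | hvx
        · exact Or.inl rfl
        · exact Or.inr (hcon v hvx)
      have hle := Finset.card_le_card hsub
      rw [Finset.card_univ] at hle
      have : ({x, y} : Finset V).card ≤ 2 := (Finset.card_insert_le _ _).trans (by simp)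
      omega
    obtain ⟨v, hvx, hvy⟩ := this
    obtain ⟨p, _⟩ := conn_del h2 v (Ne.symm hvx) (Ne.symm hvy)
    exact ⟨p⟩

end Conn

noncomputable def rr (H : G.Subgraph) (h0 : V) (v : V) : V :=
  letI := Classical.dec (v ∈ H.verts)
  if v ∈ H.verts then h0 else v

variable {H : G.Subgraph} {h0 : V}

lemma rr_mem {v : V} (hv : v ∈ H.verts) : rr H h0 v = h0 := by simp [rr, hv]

lemma rr_not_mem {v : V} (hv : v ∉ H.verts) : rr H h0 v = v := by simp [rr, hv]

lemma rr_eq_h0 (h0m : h0 ∈ H.verts) {v : V} (h : rr H h0 v = h0) : v ∈ H.verts := by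
  by_contra hv
  rw [rr_not_mem hv] at h
  exact hv (h ▸ h0m)

lemma rr_ne_h0 (h0m : h0 ∈ H.verts) {v : V} (h : rr H h0 v ≠ h0) :
    v ∉ H.verts ∧ rr H h0 v = v := by
  have hv : v ∉ H.verts := fun hm => h (rr_mem hm)
  exact ⟨hv, rr_not_mem hv⟩

def Contr (G : SimpleGraph V) (H : G.Subgraph) (h0 : V) : SimpleGraph V where
  Adj x y := x ≠ y ∧ ∃ a b, G.Adj a b ∧ ¬ H.Adj a b ∧ rr H h0 a = x ∧ rr H h0 b = y
  symm := ⟨by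
    rintro x y ⟨hne, a, b, h1, h2, h3, h4⟩
    exact ⟨hne.symm, b, a, h1.symm, fun h => h2 h.symm, h4, h3⟩⟩
  loopless := ⟨fun x h => h.1 rfl⟩

lemma reachable_contr (h0m : h0 ∈ H.verts) {a b : V} (p : G.Walk a b) :
    (Contr G H h0).Reachable (rr H h0 a) (rr H h0 b) := by
  induction p with
  | nil => exact Reachable.refl _
  | @cons u c w h p ih =>
    by_cases he : rr H h0 u = rr H h0 c
    · rw [he]; exact ih
    · refine Reachable.trans ?_ ih
      refine Adj.reachable ⟨he, u, c, h, ?_, rfl, rfl⟩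
      intro hH
      exact he (by rw [rr_mem (H.edge_vert hH), rr_mem (H.edge_vert hH.symm)])

lemma lift_contr (h0m : h0 ∈ H.verts) : ∀ {a b : V} (p : (Contr G H h0).Walk a b),
    (∀ w ∈ p.support.dropLast, w ≠ h0) → 1 ≤ p.length →
    ∃ b', rr H h0 b' = b ∧ ∃ q : G.Walk a b', q.length = p.length ∧
      q.support.dropLast = p.support.dropLast ∧
      (∀ e ∈ q.edges, e ∉ H.edgeSet) ∧ (∀ w ∈ q.support.dropLast, w ∉ H.verts) := by
  intro a b p
  induction p with
  | nil => intro _ h; simp at h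
  | @cons a c b h p ih =>
    intro hdrop _
    have hdl : (Walk.cons h p).support.dropLast = a :: p.support.dropLast :=
      dropLast_support_cons h p
    have ha : a ≠ h0 := hdrop a (by rw [hdl]; exact List.mem_cons_self)
    obtain ⟨hne, a', c', hG, hnH, ha', hc'⟩ := id h
    have haa : a' = a := by
      have := rr_ne_h0 h0m (ha' ▸ ha)
      rw [← ha', this.2]
    have haH : a ∉ H.verts := by
      rw [← haa]; exact (rr_ne_h0 h0m (ha' ▸ ha)).1
    subst haa
    rcases Nat.eq_zero_or_pos p.length with h0len | h1len
    · have hcb : c = b := eq_of_length_eq_zero h0len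
      subst hcb
      refine ⟨c', hc', Walk.cons hG Walk.nil, by simp [h0len], ?_, ?_, ?_⟩
      · rw [hdl]
        have hnil : p.support.dropLast = [] := by
          have hl := p.length_support
          rw [h0len] at hl
          have := List.length_dropLast (xs := p.support)
          rw [hl] at this
          simpa using List.length_eq_zero_iff.mp (by omega)
        rw [hnil]
        simp
      · intro e he
        simp only [edges_cons, edges_nil, List.mem_singleton] at he
        subst he
        rw [Subgraph.mem_edgeSet]
        exact hnH
      · intro w hw
        simp only [support_cons, support_nil, List.dropLast] at hw
        simp at hw
        subst hw
        exact haH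
    · have hcq : c ∈ p.support.dropLast := by
        rw [support_eq_cons p]
        have : p.support.tail ≠ [] := by
          intro hcon
          have := p.length_support
          rw [support_eq_cons p, hcon] at this
          simp only [List.length_cons, List.length_nil] at this
          omega
        rw [List.dropLast_cons_of_ne_nil this]
        exact List.mem_cons_self
      have hc : c ≠ h0 := hdrop c (by rw [hdl]; exact List.mem_cons_of_mem _ hcq)
      have hcc : c' = c := by
        have := rr_ne_h0 h0m (hc' ▸ hc)
        rw [← hc', this.2]
      subst hcc
      obtain ⟨b', hb', q, hqlen, hqsup, hqe, hqv⟩ := ih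
        (fun w hw => hdrop w (by rw [hdl]; exact List.mem_cons_of_mem _ hw)) h1len
      refine ⟨b', hb', Walk.cons hG q, by simp [hqlen], ?_, ?_, ?_⟩
      · rw [hdl, dropLast_support_cons hG q, hqsup]
      · intro e he
        simp only [edges_cons, List.mem_cons] at he
        rcases he with rfl | he
        · rw [Subgraph.mem_edgeSet]; exact hnH
        · exact hqe e he
      · intro w hw
        rw [dropLast_support_cons hG q] at hw
        rcases List.mem_cons.mp hw with rfl | hw
        · exact haH
        · exact hqv w hw

section Assemble
variable {V : Type*} {G : SimpleGraph V}

lemma second_vertex {a b : V} (p : G.Walk a b) (h : 1 ≤ p.length) :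
    ∃ x, G.Adj a x ∧ x ∈ p.support ∧ x ∈ p.support.tail := by
  cases p with
  | nil => simp at h
  | cons hadj q => exact ⟨_, hadj, by simp, by simp⟩

lemma isPath_append {a b c : V} {P : G.Walk a b} {R : G.Walk b c}
    (hP : P.IsPath) (hR : R.IsPath)
    (hint : ∀ w ∈ P.support, w ∈ R.support → w = b) : (P.append R).IsPath := by
  rw [isPath_def, support_append, List.nodup_append']
  refine ⟨hP.support_nodup, hR.support_nodup.sublist (List.tail_sublist _), ?_⟩
  intro w hwP hwR
  have := hint w hwP (List.mem_of_mem_tail hwR)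
  subst this
  exact start_not_mem_tail hR hwR

lemma tail3 {h₁ c₁ c₂ z : V} (P : G.Walk h₁ c₁) (arc : G.Walk c₁ c₂) (R : G.Walk c₂ z) :
    (P.append (arc.append R)).support.tail
      = P.support.tail ++ (arc.support.tail ++ R.support.tail) := by
  rw [tail_support_append, tail_support_append]

lemma support3 {h₁ c₁ c₂ z : V} (P : G.Walk h₁ c₁) (arc : G.Walk c₁ c₂) (R : G.Walk c₂ z) :
    (P.append (arc.append R)).support
      = P.support ++ (arc.support.tail ++ R.support.tail) := by
  rw [support_append, tail_support_append]

lemma length3 {h₁ c₁ c₂ z : V} (P : G.Walk h₁ c₁) (arc : G.Walk c₁ c₂) (R : G.Walk c₂ z) :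
    (P.append (arc.append R)).length = P.length + (arc.length + R.length) := by
  rw [length_append, length_append]

lemma edges3 {h₁ c₁ c₂ z : V} (P : G.Walk h₁ c₁) (arc : G.Walk c₁ c₂) (R : G.Walk c₂ z) :
    (P.append (arc.append R)).edges = P.edges ++ (arc.edges ++ R.edges) := by
  rw [edges_append, edges_append]

lemma append3_tail_nodup {h₁ c₁ c₂ z : V} {P : G.Walk h₁ c₁} {arc : G.Walk c₁ c₂}
    {R : G.Walk c₂ z} (hP : P.IsPath) (harc : arc.IsPath) (hR : R.IsPath)
    (d1 : ∀ w ∈ P.support.tail, w ∉ arc.support.tail)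
    (d2 : ∀ w ∈ P.support.tail, w ∉ R.support.tail)
    (d3 : ∀ w ∈ arc.support.tail, w ∉ R.support.tail) :
    (P.append (arc.append R)).support.tail.Nodup := by
  rw [tail3, List.nodup_append', List.nodup_append']
  have hPn := hP.support_nodup.sublist (List.tail_sublist _)
  have han := harc.support_nodup.sublist (List.tail_sublist _)
  have hRn := hR.support_nodup.sublist (List.tail_sublist _)
  refine ⟨hPn, ⟨han, hRn, d3⟩, ?_⟩
  intro w hwP hw
  rcases List.mem_append.mp hw with hw | hw
  · exact d1 w hwP hw
  · exact d2 w hwP hw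

end Assemble

section OnePoint

variable {V : Type*} [Fintype V] {G : SimpleGraph V} {H : G.Subgraph}

/-- An odd "cycle" meeting `H` in exactly one vertex is impossible: any closed walk
with distinct interior vertices meeting `H.verts` exactly in its basepoint has even
length. -/
lemma one_point (h2 : TwoConnected G) (hcard : 2 ≤ H.verts.ncard)
    (heven : ∀ (u v : V) (p : G.Walk u v), IsHPathWalk G H p → Even p.length)
    {u : V} (W : G.Walk u u) (hnod : W.support.tail.Nodup) (hlen : 1 ≤ W.length)
    (hu : u ∈ H.verts) (hHW : ∀ w ∈ W.support, w ∈ H.verts → w = u) :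
    Even W.length := by
  classical
  obtain ⟨x, hadj, hxW, _⟩ := second_vertex W hlen
  have hxu : x ≠ u := (hadj.ne).symm
  obtain ⟨h₁, hh₁, hh₁u⟩ := Set.exists_ne_of_one_lt_ncard (s := H.verts) (by omega) u
  obtain ⟨R₀, hR₀⟩ := conn_del h2 u hh₁u hxu
  obtain ⟨h₂, hh₂, c₂, hc₂W, Q, hQpath, hQsub, hQA, hQB⟩ :=
    trim H.verts {w | w ∈ W.support} R₀ hh₁ hxW
  have huQ : u ∉ Q.support := fun h => hR₀ (hQsub _ h)
  have hc₂u : c₂ ≠ u := fun e => huQ (e ▸ Q.end_mem_support)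
  have hh₂W : h₂ ∉ W.support := by
    intro h
    exact huQ ((hHW h₂ h hh₂) ▸ Q.start_mem_support)
  have hh₂c₂ : h₂ ≠ c₂ := fun e => hh₂W (e ▸ hc₂W)
  have hQlen : 1 ≤ Q.length := by
    rcases Nat.eq_zero_or_pos Q.length with h0 | h
    · exact absurd (eq_of_length_eq_zero h0) hh₂c₂
    · exact h
  obtain ⟨t, d, htp, hdp, ht1, hd1, hsum, hedgesplit, htsub, hdsub⟩ :=
    split_closed W hnod hc₂W hc₂u
  have hWedges : ∀ e ∈ W.edges, e ∉ H.edgeSet := edges_not_in H W u hHW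
  have key : ∀ (arc : G.Walk c₂ u), arc.IsPath → (∀ w ∈ arc.support, w ∈ W.support) →
      (∀ e ∈ arc.edges, e ∉ H.edgeSet) → 1 ≤ arc.length →
      Even (Q.length + arc.length) := by
    intro arc harc harcsub harce harclen
    have hX : (Q.append arc).IsPath := by
      refine isPath_append hQpath harc ?_
      intro w hwQ hwa
      exact hQB w hwQ (harcsub w hwa)
    have hXlen : (Q.append arc).length = Q.length + arc.length := length_append _ _
    refine hXlen ▸ heven h₂ u (Q.append arc) ⟨hX, ?_, hh₂, hu, ?_, ?_⟩
    · rw [hXlen]; omega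
    · intro w hw hne1 hne2
      rw [support_append] at hw
      intro hwH
      rcases List.mem_append.mp hw with hw | hw
      · exact hne1 (hQA w hw hwH)
      · exact hne2 (hHW w (harcsub w (List.mem_of_mem_tail hw)) hwH)
    · intro e he
      rw [edges_append] at he
      rcases List.mem_append.mp he with he | he
      · exact edges_not_in H Q h₂ hQA e he
      · exact harce e he
  have e1 : Even (Q.length + t.reverse.length) := by
    refine key t.reverse (htp.reverse) ?_ ?_ (by rw [length_reverse]; omega)
    · intro w hw
      rw [support_reverse, List.mem_reverse] at hw
      exact htsub w hw
    · intro e he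
      rw [edges_reverse, List.mem_reverse] at he
      exact hWedges e (by rw [hedgesplit]; exact List.mem_append_left _ he)
  have e2 : Even (Q.length + d.length) := by
    refine key d hdp hdsub ?_ hd1
    intro e he
    exact hWedges e (by rw [hedgesplit]; exact List.mem_append_right _ he)
  rw [length_reverse] at e1
  rw [← hsum]
  rw [Nat.even_iff] at e1 e2 ⊢
  omega

end OnePoint

section ClaimB

variable {V : Type*} [Fintype V] {G : SimpleGraph V} {H : G.Subgraph}

/-- Odd cycles (as closed walks with distinct interior vertices) disjoint from `H`
are impossible. `k` bounds the length of a path attaching the cycle to `H`. -/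
lemma claimB (h2 : TwoConnected G) (hcard : 2 ≤ H.verts.ncard)
    (heven : ∀ (u v : V) (p : G.Walk u v), IsHPathWalk G H p → Even p.length) :
    ∀ k : ℕ, ∀ (c₁ : V) (C : G.Walk c₁ c₁),
      C.support.tail.Nodup → 1 ≤ C.length → (∀ w ∈ C.support, w ∉ H.verts) →
      ∀ (h₁ : V) (P : G.Walk h₁ c₁), P.IsPath → h₁ ∈ H.verts → P.length ≤ k →
      (∀ w ∈ P.support, w ∈ H.verts → w = h₁) →
      (∀ w ∈ P.support, w ∈ C.support → w = c₁) →
      Even C.length := by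
  classical
  intro k
  induction k using Nat.strong_induction_on with
  | _ k ih =>
  intro c₁ C hnod hlen hCH h₁ P hPpath hh₁ hPk hPA hPC
  by_contra heC
  obtain ⟨x, hadjx, hxC, _⟩ := second_vertex C hlen
  have hxc₁ : x ≠ c₁ := hadjx.ne'
  have hc₁H : c₁ ∉ H.verts := hCH c₁ C.start_mem_support
  have hh₁c₁ : h₁ ≠ c₁ := fun e => hc₁H (e ▸ hh₁)
  have hPlen : 1 ≤ P.length := by
    rcases Nat.eq_zero_or_pos P.length with h0 | h
    · exact absurd (eq_of_length_eq_zero h0) hh₁c₁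
    · exact h
  obtain ⟨R₀, hR₀⟩ := conn_del h2 c₁ hxc₁ hh₁c₁
  obtain ⟨c₂, hc₂C, z, hzB, R, hRpath, hRsub, hRA, hRB⟩ :=
    trim {w | w ∈ C.support} (H.verts ∪ {w | w ∈ P.support}) R₀ hxC
      (Set.mem_union_left _ hh₁)
  have hc₁R : c₁ ∉ R.support := fun h => hR₀ (hRsub _ h)
  have hc₂c₁ : c₂ ≠ c₁ := fun e => hc₁R (e ▸ R.start_mem_support)
  have hc₂H : c₂ ∉ H.verts := hCH c₂ hc₂C
  have hc₂P : c₂ ∉ P.support := fun h => hc₂c₁ (hPC c₂ h hc₂C)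
  have hc₂z : c₂ ≠ z := by
    intro e
    subst e
    rcases hzB with h | h
    · exact hc₂H h
    · exact hc₂P h
  have hRlen : 1 ≤ R.length := by
    rcases Nat.eq_zero_or_pos R.length with h0 | h
    · exact absurd (eq_of_length_eq_zero h0) hc₂z
    · exact h
  have hzc₁ : z ≠ c₁ := fun e => hc₁R (e ▸ R.end_mem_support)
  obtain ⟨t, d, htp, hdp, ht1, hd1, hsum, _hedgesplit, htsub, hdsub⟩ :=
    split_closed C hnod hc₂C hc₂c₁
  have harc2p : d.reverse.IsPath := hdp.reverse
  have harc2sub : ∀ w ∈ d.reverse.support, w ∈ C.support := by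
    intro w hw; rw [support_reverse, List.mem_reverse] at hw; exact hdsub w hw
  by_cases hzH : z ∈ H.verts
  · -- z lands in H: we get two H-paths (or two one-point cycles)
    have key : ∀ (arc : G.Walk c₁ c₂), arc.IsPath → (∀ w ∈ arc.support, w ∈ C.support) →
        Even (P.length + (arc.length + R.length)) := by
      intro arc harc harcsub
      have harce : ∀ e ∈ arc.edges, e ∉ H.edgeSet :=
        edges_not_in H arc c₁ (fun w hw hwH => absurd hwH (hCH w (harcsub w hw)))
      have hXlen := length3 P arc R
      have hXedges : ∀ e ∈ (P.append (arc.append R)).edges, e ∉ H.edgeSet := by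
        intro e he
        rw [edges3] at he
        rcases List.mem_append.mp he with he | he
        · exact edges_not_in H P h₁ hPA e he
        · rcases List.mem_append.mp he with he | he
          · exact harce e he
          · exact edges_not_in H R z
              (fun w hw hwH => hRB w hw (Set.mem_union_left _ hwH)) e he
      have hd1' : ∀ w ∈ P.support.tail, w ∉ arc.support.tail := by
        intro w hwP hwa
        have hwc₁ : w = c₁ :=
          hPC w (List.mem_of_mem_tail hwP) (harcsub w (List.mem_of_mem_tail hwa))
        subst hwc₁
        exact start_not_mem_tail harc hwa
      have hd3' : ∀ w ∈ arc.support.tail, w ∉ R.support.tail := by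
        intro w hwa hwR
        have hwc₂ : w = c₂ :=
          hRA w (List.mem_of_mem_tail hwR) (harcsub w (List.mem_of_mem_tail hwa))
        subst hwc₂
        exact start_not_mem_tail hRpath hwR
      by_cases hzh : z = h₁
      · subst hzh
        have hd2' : ∀ w ∈ P.support.tail, w ∉ R.support.tail := by
          intro w hwP hwR
          have hwz : w = z := hRB w (List.mem_of_mem_tail hwR)
            (Set.mem_union_right _ (List.mem_of_mem_tail hwP))
          subst hwz
          exact start_not_mem_tail hPpath hwP
        have hXnod := append3_tail_nodup hPpath harc hRpath hd1' hd2' hd3'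
        have hint : ∀ w ∈ (P.append (arc.append R)).support, w ∈ H.verts → w = z := by
          intro w hw hwH
          rw [support3] at hw
          rcases List.mem_append.mp hw with hw | hw
          · exact hPA w hw hwH
          · rcases List.mem_append.mp hw with hw | hw
            · exact absurd hwH (hCH w (harcsub w (List.mem_of_mem_tail hw)))
            · exact hRB w (List.mem_of_mem_tail hw) (Set.mem_union_left _ hwH)
        have heq := one_point h2 hcard heven (P.append (arc.append R)) hXnod
          (by rw [hXlen]; omega) hh₁ hint
        rw [hXlen] at heq
        exact heq
      · have hzP' : z ∉ P.support := fun h => hzh (hPA z h hzH)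
        have hXpath : (P.append (arc.append R)).IsPath := by
          refine isPath_append hPpath (isPath_append harc hRpath ?_) ?_
          · intro w hwa hwR
            exact hRA w hwR (harcsub w hwa)
          · intro w hwP hwin
            rw [support_append] at hwin
            rcases List.mem_append.mp hwin with hw | hw
            · exact hPC w hwP (harcsub w hw)
            · have hwz : w = z := hRB w (List.mem_of_mem_tail hw)
                (Set.mem_union_right _ hwP)
              exact absurd (hwz ▸ hwP) hzP'
        have hHP : IsHPathWalk G H (P.append (arc.append R)) := by
          refine ⟨hXpath, by rw [hXlen]; omega, hh₁, hzH, ?_, hXedges⟩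
          intro w hw hne1 hne2 hwH
          rw [support3] at hw
          rcases List.mem_append.mp hw with hw | hw
          · exact hne1 (hPA w hw hwH)
          · rcases List.mem_append.mp hw with hw | hw
            · exact hCH w (harcsub w (List.mem_of_mem_tail hw)) hwH
            · exact hne2 (hRB w (List.mem_of_mem_tail hw) (Set.mem_union_left _ hwH))
        have heq := heven h₁ z _ hHP
        rw [hXlen] at heq
        exact heq
    have e1 := key t htp htsub
    have e2 := key d.reverse harc2p harc2sub
    rw [length_reverse] at e2
    apply heC
    rw [← hsum]
    rw [Nat.even_iff] at e1 e2 ⊢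
    omega
  · -- z lies on P: recurse with a shorter attachment path
    have hzP : z ∈ P.support := by
      rcases hzB with h | h
      · exact absurd h hzH
      · exact h
    have hzh₁ : z ≠ h₁ := fun e => hzH (e ▸ hh₁)
    have hPsplit : (P.takeUntil z hzP).append (P.dropUntil z hzP) = P := P.take_spec hzP
    set P₁ := P.takeUntil z hzP with hP₁def
    set P₂ := P.dropUntil z hzP with hP₂def
    have hP₁p : P₁.IsPath := hPpath.takeUntil hzP
    have hP₂p : P₂.IsPath := hPpath.dropUntil hzP
    have hlensplit : P₁.length + P₂.length = P.length := by
      rw [← hPsplit, length_append]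
    have hP₂1 : 1 ≤ P₂.length := by
      rcases Nat.eq_zero_or_pos P₂.length with h0 | h
      · exact absurd (eq_of_length_eq_zero h0) hzc₁
      · exact h
    have hsupP : P.support = P₁.support ++ P₂.support.tail := by
      rw [← hPsplit, support_append]
    have hdisjP : ∀ w ∈ P₁.support, w ∉ P₂.support.tail := by
      have hnd := hPpath.support_nodup
      rw [hsupP, List.nodup_append'] at hnd
      exact hnd.2.2
    have hc₁P₂tail : c₁ ∈ P₂.support.tail := end_mem_tail_support_of_ne hzc₁ P₂
    have hP₁sub : ∀ w ∈ P₁.support, w ∈ P.support :=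
      fun w hw => support_takeUntil_subset _ hzP hw
    have hP₂sub : ∀ w ∈ P₂.support, w ∈ P.support :=
      fun w hw => support_dropUntil_subset _ hzP hw
    have hP₁k : P₁.length < k := by omega
    have keyD : ∀ (arc : G.Walk c₁ c₂), arc.IsPath → (∀ w ∈ arc.support, w ∈ C.support) →
        Even (P₂.length + (arc.length + R.length)) := by
      intro arc harc harcsub
      have hDlen := length3 P₂ arc R
      have hd1' : ∀ w ∈ P₂.support.tail, w ∉ arc.support.tail := by
        intro w hwP hwa
        have hwc₁ : w = c₁ := hPC w (hP₂sub w (List.mem_of_mem_tail hwP))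
          (harcsub w (List.mem_of_mem_tail hwa))
        subst hwc₁
        exact start_not_mem_tail harc hwa
      have hd2' : ∀ w ∈ P₂.support.tail, w ∉ R.support.tail := by
        intro w hwP hwR
        have hwz : w = z := hRB w (List.mem_of_mem_tail hwR)
          (Set.mem_union_right _ (hP₂sub w (List.mem_of_mem_tail hwP)))
        subst hwz
        exact start_not_mem_tail hP₂p hwP
      have hd3' : ∀ w ∈ arc.support.tail, w ∉ R.support.tail := by
        intro w hwa hwR
        have hwc₂ : w = c₂ :=
          hRA w (List.mem_of_mem_tail hwR) (harcsub w (List.mem_of_mem_tail hwa))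
        subst hwc₂
        exact start_not_mem_tail hRpath hwR
      have hDnod := append3_tail_nodup hP₂p harc hRpath hd1' hd2' hd3'
      have hDH : ∀ w ∈ (P₂.append (arc.append R)).support, w ∉ H.verts := by
        intro w hw hwH
        rw [support3] at hw
        rcases List.mem_append.mp hw with hw | hw
        · have hwh₁ : w = h₁ := hPA w (hP₂sub w hw) hwH
          rw [support_eq_cons] at hw
          rcases List.mem_cons.mp hw with h | h
          · exact hzh₁ (by rw [← h, hwh₁])
          · exact hdisjP w (by rw [hwh₁]; exact P₁.start_mem_support) h
        · rcases List.mem_append.mp hw with hw | hw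
          · exact hCH w (harcsub w (List.mem_of_mem_tail hw)) hwH
          · have hwz : w = z := hRB w (List.mem_of_mem_tail hw)
              (Set.mem_union_left _ hwH)
            exact hzH (hwz ▸ hwH)
      have hP₁C : ∀ w ∈ P₁.support, w ∈ (P₂.append (arc.append R)).support → w = z := by
        intro w hw hwD
        rw [support3] at hwD
        rcases List.mem_append.mp hwD with hwD | hwD
        · rw [support_eq_cons] at hwD
          rcases List.mem_cons.mp hwD with h | h
          · exact h
          · exact absurd h (hdisjP w hw)
        · rcases List.mem_append.mp hwD with hwD | hwD
          · have hwc₁ : w = c₁ := hPC w (hP₁sub w hw)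
              (harcsub w (List.mem_of_mem_tail hwD))
            subst hwc₁
            exact absurd hc₁P₂tail (hdisjP w hw)
          · exact hRB w (List.mem_of_mem_tail hwD)
              (Set.mem_union_right _ (hP₁sub w hw))
      have heq := ih P₁.length hP₁k z (P₂.append (arc.append R)) hDnod
        (by rw [hDlen]; omega) hDH h₁ P₁ hP₁p hh₁ le_rfl
        (fun w hw hwH => hPA w (hP₁sub w hw) hwH) hP₁C
      rw [hDlen] at heq
      exact heq
    have e1 := keyD t htp htsub
    have e2 := keyD d.reverse harc2p harc2sub
    rw [length_reverse] at e2
    apply heC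
    rw [← hsum]
    rw [Nat.even_iff] at e1 e2 ⊢
    omega

end ClaimB

section NoOdd

variable {V : Type*} [Fintype V] {G : SimpleGraph V} {H : G.Subgraph} {h0 : V}

lemma mem_support_rotate [DecidableEq V] {u x : V} (c : G.Walk u u) (hlen : 1 ≤ c.length)
    (hx : x ∈ c.support) (w : V) : (w ∈ (c.rotate _ hx).support ↔ w ∈ c.support) := by
  rw [mem_closed_support_iff_tail _ (by rw [length_rotate]; exact hlen),
    mem_closed_support_iff_tail _ hlen]
  exact (c.support_rotate _ hx).mem_iff

lemma no_odd_closed (h2 : TwoConnected G) (hcard : 2 ≤ H.verts.ncard)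
    (heven : ∀ (u v : V) (p : G.Walk u v), IsHPathWalk G H p → Even p.length)
    (h0m : h0 ∈ H.verts) (v : V) (c : (Contr G H h0).Walk v v)
    (hnod : c.support.tail.Nodup) (hlen : 1 ≤ c.length) : Even c.length := by
  classical
  by_contra heC
  by_cases hmem : h0 ∈ c.support
  · -- Case A : the closed walk goes through the contracted vertex
    have hWlen : (c.rotate _ hmem).length = c.length := length_rotate c hmem
    have hWnod : (c.rotate _ hmem).support.tail.Nodup :=
      ((c.support_rotate _ hmem).nodup_iff).mpr hnod
    cases hW : c.rotate _ hmem with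
    | nil =>
      rw [hW] at hWlen
      simp at hWlen
      omega
    | @cons _ x _ hadj W₂ =>
      rw [hW] at hWlen hWnod
      simp only [support_cons, List.tail_cons] at hWnod
      -- hWnod : W₂.support.Nodup
      have hxh0 : x ≠ h0 := (hadj.1).symm
      have hW₂len : 1 ≤ W₂.length := by
        rcases Nat.eq_zero_or_pos W₂.length with h0' | h
        · exact absurd (eq_of_length_eq_zero h0') hxh0
        · exact h
      have hdecomp : W₂.support = W₂.support.dropLast ++ [h0] := support_decomp W₂
      have hh0drop : ∀ w ∈ W₂.support.dropLast, w ≠ h0 := by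
        have := hWnod
        rw [hdecomp, List.nodup_append'] at this
        intro w hw he
        exact this.2.2 hw (by simp [he])
      have hdropnod : W₂.support.dropLast.Nodup := by
        have := hWnod
        rw [hdecomp, List.nodup_append'] at this
        exact this.1
      obtain ⟨v', hv', q, hqlen, hqsup, hqe, hqv⟩ :=
        lift_contr h0m W₂ hh0drop hW₂len
      have hv'H : v' ∈ H.verts := rr_eq_h0 h0m hv'
      obtain ⟨hne, a', b', hG, hnH, ha', hb'⟩ := hadj
      have ha'H : a' ∈ H.verts := rr_eq_h0 h0m ha'
      have hb'x : b' = x ∧ b' ∉ H.verts := by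
        have hx : rr H h0 b' ≠ h0 := by rw [hb']; exact hne.symm
        have := rr_ne_h0 h0m hx
        exact ⟨by rw [← hb', this.2], this.1⟩
      rw [hb'x.1] at hG hnH
      -- the lifted walk W' : G.Walk a' v'
      have hqsupd : q.support = W₂.support.dropLast ++ [v'] := by
        rw [support_decomp q, hqsup]
      have hqverts : ∀ w ∈ q.support, w ≠ v' → w ∉ H.verts := by
        intro w hw hwv
        rw [hqsupd] at hw
        rcases List.mem_append.mp hw with hw | hw
        · exact hqv w (by rw [hqsup]; exact hw)
        · simp at hw; exact absurd hw hwv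
      have hconslen : (Walk.cons hG q).length = c.length := by
        rw [← hWlen]
        simp [hqlen]; rfl
      have hedges : ∀ e ∈ (Walk.cons hG q).edges, e ∉ H.edgeSet := by
        intro e he
        rw [edges_cons] at he
        rcases List.mem_cons.mp he with rfl | he
        · rw [Subgraph.mem_edgeSet]; exact hnH
        · exact hqe e he
      by_cases hav : a' = v'
      · -- one-point cycle
        subst hav
        have hcnod : (Walk.cons hG q).support.tail.Nodup := by
          simp only [support_cons, List.tail_cons]
          rw [hqsupd, List.nodup_append']
          refine ⟨hdropnod, by simp, ?_⟩
          intro w hw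
          simp only [List.mem_singleton]
          intro he
          exact (hqv w (by rw [hqsup]; exact hw)) (he ▸ hv'H)
        have hHWcond : ∀ w ∈ (Walk.cons hG q).support, w ∈ H.verts → w = a' := by
          intro w hw hwH
          rw [support_cons] at hw
          rcases List.mem_cons.mp hw with rfl | hw
          · rfl
          · by_contra hne'
            exact hqverts w hw hne' hwH
        have heq := one_point h2 hcard heven (Walk.cons hG q) hcnod
          (by rw [hconslen]; omega) hv'H hHWcond
        rw [hconslen] at heq
        exact heC heq
      · -- genuine H-path
        have hpath : (Walk.cons hG q).IsPath := by
          rw [isPath_def, support_cons, List.nodup_cons]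
          constructor
          · intro ha
            rw [hqsupd] at ha
            rcases List.mem_append.mp ha with hw | hw
            · exact (hqv a' (by rw [hqsup]; exact hw)) ha'H
            · simp at hw; exact hav hw
          · rw [hqsupd, List.nodup_append']
            refine ⟨hdropnod, by simp, ?_⟩
            intro w hw
            simp only [List.mem_singleton]
            intro he
            exact (hqv w (by rw [hqsup]; exact hw)) (he ▸ hv'H)
        have hHP : IsHPathWalk G H (Walk.cons hG q) := by
          refine ⟨hpath, by simp, ha'H, hv'H, ?_, hedges⟩
          intro w hw hne1 hne2 hwH
          rw [support_cons] at hw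
          rcases List.mem_cons.mp hw with rfl | hw
          · exact hne1 rfl
          · exact hqverts w hw hne2 hwH
        have := heven a' v' _ hHP
        rw [hconslen] at this
        exact heC this
  · -- Case B : the closed walk avoids the contracted vertex entirely
    have hvh0 : v ≠ h0 := fun e => hmem (e ▸ c.start_mem_support)
    have hdrop : ∀ w ∈ c.support.dropLast, w ≠ h0 := by
      intro w hw he
      subst he
      exact hmem (by rw [support_decomp c]; exact List.mem_append_left _ hw)
    obtain ⟨v'', hv'', q0, hqlen, hqsup, hqe, hqv⟩ := lift_contr h0m c hdrop hlen
    have hv''v : v'' = v := by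
      have hx : rr H h0 v'' ≠ h0 := by rw [hv'']; exact hvh0
      rw [← hv'', (rr_ne_h0 h0m hx).2]
    subst hv''v
    have hvH : v'' ∉ H.verts := by
      have hx : rr H h0 v'' ≠ h0 := by rw [hv'']; exact hvh0
      exact (rr_ne_h0 h0m hx).1
    have hqsupc : q0.support = c.support := by
      rw [support_decomp q0, hqsup, ← support_decomp c]
    have hqnod : q0.support.tail.Nodup := by rw [hqsupc]; exact hnod
    have hq1 : 1 ≤ q0.length := by omega
    have hqH : ∀ w ∈ q0.support, w ∉ H.verts := by
      intro w hw
      rw [support_decomp q0] at hw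
      rcases List.mem_append.mp hw with hw | hw
      · exact hqv w hw
      · simp at hw; subst hw; exact hvH
    -- attach to H via a trimmed path
    obtain ⟨p0⟩ := ((conn_of_two h2).preconnected h0 v'')
    obtain ⟨h₁, hh₁, c₁, hc₁q, P, hPp, _hPsub, hPA, hPC⟩ :=
      trim H.verts {w | w ∈ q0.support} p0 h0m q0.end_mem_support
    have hrotnod : (q0.rotate _ hc₁q).support.tail.Nodup :=
      ((q0.support_rotate _ hc₁q).nodup_iff).mpr hqnod
    have hrotlen : (q0.rotate _ hc₁q).length = q0.length := length_rotate q0 hc₁q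
    have := claimB h2 hcard heven P.length c₁ (q0.rotate _ hc₁q) hrotnod
      (by omega)
      (fun w hw => hqH w ((mem_support_rotate q0 hq1 hc₁q w).mp hw))
      h₁ P hPp hh₁ le_rfl hPA
      (fun w hw hw2 => hPC w hw ((mem_support_rotate q0 hq1 hc₁q w).mp hw2))
    rw [hrotlen, hqlen] at this
    exact heC this

end NoOdd

section Main

variable {V : Type*} [Fintype V] {G : SimpleGraph V} {H : G.Subgraph} {h0 : V}

lemma closed_even (h2 : TwoConnected G) (hcard : 2 ≤ H.verts.ncard)
    (heven : ∀ (u v : V) (p : G.Walk u v), IsHPathWalk G H p → Even p.length)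
    (h0m : h0 ∈ H.verts) (v : V) (w : (Contr G H h0).Walk v v) : Even w.length := by
  by_contra h
  have hodd : Odd w.length := (Nat.even_or_odd w.length).resolve_left h
  obtain ⟨v', c, hnod, hodd', hlen⟩ := exists_odd_closed w.length w rfl hodd
  have heq := no_odd_closed h2 hcard heven h0m v' c hnod hlen
  rcases hodd' with ⟨k, hk⟩
  rcases heq with ⟨m, hm⟩
  omega

lemma reach_contr (h2 : TwoConnected G) (h0m : h0 ∈ H.verts) (x : V) :
    (Contr G H h0).Reachable h0 (rr H h0 x) := by
  obtain ⟨p⟩ := (conn_of_two h2).preconnected h0 x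
  have := reachable_contr h0m p
  rwa [rr_mem h0m] at this

lemma color_ne (h2 : TwoConnected G) (hcard : 2 ≤ H.verts.ncard)
    (heven : ∀ (u v : V) (p : G.Walk u v), IsHPathWalk G H p → Even p.length)
    (h0m : h0 ∈ H.verts) {a b : V} (hadj : (Contr G H h0).Adj a b)
    (hra : (Contr G H h0).Reachable h0 a) (hrb : (Contr G H h0).Reachable h0 b) :
    (Contr G H h0).dist h0 a % 2 ≠ (Contr G H h0).dist h0 b % 2 := by
  obtain ⟨pa, hpa⟩ := hra.exists_walk_length_eq_dist
  obtain ⟨pb, hpb⟩ := hrb.exists_walk_length_eq_dist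
  have he := closed_even h2 hcard heven h0m h0 (pa.append (Walk.cons hadj pb.reverse))
  rw [length_append, length_cons, length_reverse, hpa, hpb] at he
  rw [Nat.even_iff] at he
  omega

end Main

end CB

/-- If `H` is a connected subgraph (with at least 2 vertices) of a 2-connected graph `G`
and every `H`-path has even length, then the contraction `G/H` is bipartite: there is a
proper 2-colouring of the vertices of `G/H`, i.e. a 2-colouring of `V` which is constant
on `V(H)` and separates the endpoints of every edge of `G` not belonging to `H`. -/
theorem contraction_bipartite {V : Type*} [Fintype V] (G : SimpleGraph V)
    (h2 : TwoConnected G) (H : G.Subgraph) (hH : H.Connected)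
    (hcard : 2 ≤ H.verts.ncard)
    (heven : ∀ (u v : V) (p : G.Walk u v), IsHPathWalk G H p → Even p.length) :
    ∃ b : V → Bool, (∀ x ∈ H.verts, ∀ y ∈ H.verts, b x = b y) ∧
      ∀ x y : V, G.Adj x y → ¬ H.Adj x y → b x ≠ b y := by
  classical
  obtain ⟨h0, h0m⟩ := Set.nonempty_of_ncard_ne_zero (by omega : H.verts.ncard ≠ 0)
  refine ⟨fun v => decide (((CB.Contr G H h0).dist h0 (CB.rr H h0 v)) % 2 = 1), ?_, ?_⟩
  · intro x hx y hy
    simp only [CB.rr_mem hx, CB.rr_mem hy]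
  · intro x y hxy hnxy
    by_cases hxH : x ∈ H.verts <;> by_cases hyH : y ∈ H.verts
    · -- both endpoints in H : impossible, single-edge H-path of odd length
      exfalso
      have hpath : IsHPathWalk G H (Walk.cons hxy Walk.nil) := by
        refine ⟨?_, by simp, hxH, hyH, ?_, ?_⟩
        · rw [Walk.isPath_def]
          simp [hxy.ne]
        · intro w hw h1 h2
          rw [Walk.support_cons, Walk.support_nil] at hw
          simp only [List.mem_cons, List.mem_singleton, List.not_mem_nil, or_false] at hw
          rcases hw with rfl | rfl
          · exact absurd rfl h1
          · exact absurd rfl h2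
        · intro e he
          rw [Walk.edges_cons, Walk.edges_nil] at he
          simp only [List.mem_singleton] at he
          subst he
          rw [SimpleGraph.Subgraph.mem_edgeSet]
          exact hnxy
      have := heven x y _ hpath
      simp at this
    all_goals {
      have hne : CB.rr H h0 x ≠ CB.rr H h0 y := by
        first
        | (rw [CB.rr_mem hxH, CB.rr_not_mem hyH]
           intro e
           exact hyH (e ▸ h0m))
        | (rw [CB.rr_not_mem hxH, CB.rr_mem hyH]
           intro e
           exact hxH (e.symm ▸ h0m))
        | (rw [CB.rr_not_mem hxH, CB.rr_not_mem hyH]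
           exact hxy.ne)
      have hadj : (CB.Contr G H h0).Adj (CB.rr H h0 x) (CB.rr H h0 y) :=
        ⟨hne, x, y, hxy, hnxy, rfl, rfl⟩
      have hcn := CB.color_ne h2 hcard heven h0m hadj
        (CB.reach_contr h2 h0m x) (CB.reach_contr h2 h0m y)
      intro hb
      simp only at hb
      rcases Nat.mod_two_eq_zero_or_one ((CB.Contr G H h0).dist h0 (CB.rr H h0 x)) with hm | hm <;>
        rcases Nat.mod_two_eq_zero_or_one ((CB.Contr G H h0).dist h0 (CB.rr H h0 y)) with hn | hn
      · exact hcn (hm.trans hn.symm)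
      · rw [hm, hn] at hb; simp at hb
      · rw [hm, hn] at hb; simp at hb
      · exact hcn (hm.trans hn.symm)
    }
end

section
/- Let G be a 2-connected graph containing an odd cycle C and a connected subgraph H with |V(H)| ≥ 2 such that C meets H in exactly one vertex. Then G contains an odd H-path. -/
open SimpleGraph

private lemma start_mem_support_tail_of_closed {V : Type*} {G : SimpleGraph V} {a : V}
    (p : G.Walk a a) (hp : ¬p.Nil) : a ∈ p.support.tail := by
  cases p with
  | nil => simp at hp
  | cons h q => simpa using q.end_mem_support

private lemma mem_support_tail_iff_of_closed {V : Type*} {G : SimpleGraph V} {a w : V}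
    (p : G.Walk a a) (hp : ¬p.Nil) : w ∈ p.support.tail ↔ w ∈ p.support := by
  constructor
  · intro h
    rw [p.support_eq_cons]
    exact List.mem_cons_of_mem _ h
  · intro h
    rw [p.support_eq_cons] at h
    rcases List.mem_cons.mp h with rfl | h
    · exact start_mem_support_tail_of_closed p hp
    · exact h

private lemma mem_support_rotate_iff {V : Type*} [DecidableEq V] {G : SimpleGraph V} {a x w : V}
    (p : G.Walk a a) (hx : x ∈ p.support) (hp : ¬p.Nil) :
    w ∈ (p.rotate x hx).support ↔ w ∈ p.support := by
  have hlen : (p.rotate x hx).length = p.length := by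
    have := congr_arg SimpleGraph.Walk.length (p.take_spec hx)
    rw [SimpleGraph.Walk.length_append] at this
    simp only [SimpleGraph.Walk.rotate, SimpleGraph.Walk.length_append]
    omega
  have hp' : ¬(p.rotate x hx).Nil := by
    rw [SimpleGraph.Walk.not_nil_iff_lt_length] at hp ⊢
    omega
  rw [← mem_support_tail_iff_of_closed _ hp', ← mem_support_tail_iff_of_closed _ hp]
  exact (SimpleGraph.Walk.support_rotate p x hx).mem_iff

set_option maxHeartbeats 2000000 in
/-- If a 2-connected graph `G` contains an odd cycle meeting a connected subgraph `H`
(with at least 2 vertices) in exactly one vertex, then `G` contains an odd `H`-path. -/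
theorem odd_hpath_of_odd_cycle {V : Type*} [Fintype V] (G : SimpleGraph V)
    (h2 : TwoConnected G) (H : G.Subgraph) (hH : H.Connected)
    (hcard : 2 ≤ H.verts.ncard)
    (v₀ : V) (C : G.Walk v₀ v₀) (hC : C.IsCycle) (hCodd : Odd C.length)
    (hmeet : ∃ x : V, {w : V | w ∈ C.support ∧ w ∈ H.verts} = {x}) :
    ∃ (u v : V) (q : G.Walk u v), IsHPathWalk G H q ∧ Odd q.length := by
  classical
  obtain ⟨x, hx⟩ := hmeet
  -- basic facts about x
  have hxprop : x ∈ C.support ∧ x ∈ H.verts := by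
    have : x ∈ ({x} : Set V) := rfl
    rw [← hx] at this
    exact this
  obtain ⟨hxC, hxH⟩ := hxprop
  have hmeet' : ∀ w : V, w ∈ C.support → w ∈ H.verts → w = x := by
    intro w h1 h2'
    have : w ∈ ({w : V | w ∈ C.support ∧ w ∈ H.verts}) := ⟨h1, h2'⟩
    rw [hx] at this
    exact this
  -- a vertex of H different from x
  obtain ⟨y, hyH, hyx⟩ := Set.exists_ne_of_one_lt_ncard (lt_of_lt_of_le Nat.one_lt_two hcard) x
  -- a vertex of C different from x (and adjacent to it)
  have hCnn : ¬ C.Nil := hC.not_nil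
  -- rotate the cycle to start at x
  set C' : G.Walk x x := C.rotate x hxC with hC'def
  have hC'cyc : C'.IsCycle := hC.rotate hxC
  have hC'nn : ¬ C'.Nil := hC'cyc.not_nil
  have hmemrot : ∀ w : V, w ∈ C'.support ↔ w ∈ C.support := fun w =>
    mem_support_rotate_iff C hxC hCnn
  have hC'len : C'.length = C.length := by
    have := congr_arg SimpleGraph.Walk.length (C.take_spec hxC)
    rw [SimpleGraph.Walk.length_append] at this
    simp only [hC'def, SimpleGraph.Walk.rotate, SimpleGraph.Walk.length_append]
    omega
  -- a neighbour of x on the cycle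
  obtain ⟨c, hadj, C'', hC''⟩ := SimpleGraph.Walk.not_nil_iff.mp hC'nn
  have hcx : c ≠ x := (G.ne_of_adj hadj).symm
  have hcC : c ∈ C.support := by
    rw [← hmemrot]
    rw [hC'']
    simp
  -- an initial path from c to y avoiding x
  have hconn := (h2.2 x).preconnected ⟨c, hcx⟩ ⟨y, hyx⟩
  obtain ⟨W₀⟩ := hconn
  let W₁ : G.Walk c y := W₀.map (SimpleGraph.Embedding.induce {w : V | w ≠ x}).toHom
  have hxW₁ : x ∉ W₁.support := by
    intro hmem
    rw [show W₁.support = W₀.support.map _ from SimpleGraph.Walk.support_map _ _] at hmem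
    obtain ⟨a, _, ha2⟩ := List.mem_map.mp hmem
    exact a.2 ha2
  -- the family of candidate paths, and a shortest one
  have hex : ∃ n : ℕ, ∃ (u z : V) (P : G.Walk u z), P.IsPath ∧ u ∈ C.support ∧
      z ∈ H.verts ∧ x ∉ P.support ∧ P.length = n :=
    ⟨W₁.bypass.length, c, y, W₁.bypass, W₁.bypass_isPath, hcC, hyH,
      fun h => hxW₁ (W₁.support_bypass_subset h), rfl⟩
  set n := Nat.find hex with hn
  obtain ⟨u, z, P, hPp, huC, hzH, hxP, hPlen⟩ := Nat.find_spec hex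
  have hux : u ≠ x := fun h => hxP (h ▸ P.start_mem_support)
  have hzx : z ≠ x := fun h => hxP (h ▸ P.end_mem_support)
  have huH : u ∉ H.verts := fun h => hux (hmeet' u huC h)
  have hzC : z ∉ C.support := fun h => hzx (hmeet' z h hzH)
  have huz : u ≠ z := fun h => huH (h ▸ hzH)
  have hPpos : 0 < P.length := by
    rw [← SimpleGraph.Walk.not_nil_iff_lt_length]
    exact SimpleGraph.Walk.not_nil_of_ne huz
  -- interior of P avoids C
  have hintC : ∀ w ∈ P.support, w ≠ u → w ∉ C.support := by
    intro w hw hwu hwC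
    have hlt : (P.dropUntil w hw).length < n := by
      have hspec := congr_arg SimpleGraph.Walk.length (P.take_spec hw)
      rw [SimpleGraph.Walk.length_append] at hspec
      have : 0 < (P.takeUntil w hw).length := by
        rw [← SimpleGraph.Walk.not_nil_iff_lt_length]
        exact SimpleGraph.Walk.not_nil_of_ne (Ne.symm hwu)
      omega
    exact Nat.find_min hex hlt ⟨w, z, P.dropUntil w hw, hPp.dropUntil hw, hwC, hzH,
      fun h => hxP (P.support_dropUntil_subset hw h), rfl⟩
  -- interior of P avoids H
  have hintH : ∀ w ∈ P.support, w ≠ z → w ∉ H.verts := by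
    intro w hw hwz hwH
    have hlt : (P.takeUntil w hw).length < n := by
      have hspec := congr_arg SimpleGraph.Walk.length (P.take_spec hw)
      rw [SimpleGraph.Walk.length_append] at hspec
      have : 0 < (P.dropUntil w hw).length := by
        rw [← SimpleGraph.Walk.not_nil_iff_lt_length]
        exact SimpleGraph.Walk.not_nil_of_ne hwz
      omega
    exact Nat.find_min hex hlt ⟨u, w, P.takeUntil w hw, hPp.takeUntil hw, huC, hwH,
      fun h => hxP (P.support_takeUntil_subset hw h), rfl⟩
  -- split the cycle at u
  have huC' : u ∈ C'.support := (hmemrot u).mpr huC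
  set A₁ : G.Walk x u := C'.takeUntil u huC' with hA₁def
  set A₂ : G.Walk u x := C'.dropUntil u huC' with hA₂def
  have hspec : A₁.append A₂ = C' := C'.take_spec huC'
  have hlensum : A₁.length + A₂.length = C.length := by
    have := congr_arg SimpleGraph.Walk.length hspec
    rw [SimpleGraph.Walk.length_append] at this
    omega
  -- nodup structure of the cycle support
  have hsupp : C'.support = A₁.support ++ A₂.support.tail := by
    rw [← hspec, SimpleGraph.Walk.support_append]
  have htails : C'.support.tail = A₁.support.tail ++ A₂.support.tail := by
    have h1 := A₁.support_eq_cons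
    rw [hsupp, h1]
    simp
  have hnd : (A₁.support.tail ++ A₂.support.tail).Nodup := by
    rw [← htails]; exact hC'cyc.support_nodup
  have hA₂nn : ¬ A₂.Nil := SimpleGraph.Walk.not_nil_of_ne hux
  have hA₁nn : ¬ A₁.Nil := SimpleGraph.Walk.not_nil_of_ne (Ne.symm hux)
  have hxA₂t : x ∈ A₂.support.tail := SimpleGraph.Walk.end_mem_tail_support_of_ne hux A₂
  have huA₁t : u ∈ A₁.support.tail :=
    SimpleGraph.Walk.end_mem_tail_support_of_ne (Ne.symm hux) A₁
  have hA₁path : A₁.IsPath := by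
    apply SimpleGraph.Walk.IsPath.mk'
    rw [A₁.support_eq_cons]
    refine List.nodup_cons.mpr ⟨?_, (List.nodup_append.mp hnd).1⟩
    intro hxA₁t
    exact (List.disjoint_of_nodup_append hnd) hxA₁t hxA₂t
  have hA₂path : A₂.IsPath := by
    apply SimpleGraph.Walk.IsPath.mk'
    rw [A₂.support_eq_cons]
    refine List.nodup_cons.mpr ⟨?_, (List.nodup_append.mp hnd).2.1⟩
    intro huA₂t
    exact (List.disjoint_of_nodup_append hnd) huA₁t huA₂t
  -- it suffices to find an arc of the right parity
  suffices hsuff : ∃ A : G.Walk x u, A.IsPath ∧ (∀ w ∈ A.support, w ∈ C.support) ∧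
      Odd (A.length + P.length) by
    obtain ⟨A, hAp, hAC, hAodd⟩ := hsuff
    refine ⟨x, z, A.append P, ⟨?_, ?_, hxH, hzH, ?_, ?_⟩, ?_⟩
    · -- path
      apply SimpleGraph.Walk.IsPath.mk'
      rw [SimpleGraph.Walk.support_append]
      rw [List.nodup_append]
      refine ⟨hAp.support_nodup, ?_, ?_⟩
      · have := hPp.support_nodup
        rw [P.support_eq_cons] at this
        exact this.of_cons
      · intro w hwA w' hwPt hww
        subst hww
        have hwP : w ∈ P.support := by
          rw [P.support_eq_cons]; exact List.mem_cons_of_mem _ hwPt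
        have hwu : w ≠ u := by
          intro h
          have := hPp.support_nodup
          rw [P.support_eq_cons] at this
          exact (List.nodup_cons.mp this).1 (h ▸ hwPt)
        exact hintC w hwP hwu (hAC w hwA)
    · -- positive length
      rw [SimpleGraph.Walk.length_append]
      omega
    · -- interior avoids H
      intro w hw hwx hwz
      rcases (SimpleGraph.Walk.mem_support_append_iff _ _).mp hw with hwA | hwP
      · intro hwH
        exact hwx (hmeet' w (hAC w hwA) hwH)
      · by_cases hwu : w = u
        · exact hwu ▸ huH
        · exact hintH w hwP hwz
    · -- edges avoid H
      intro e he
      induction e using Sym2.ind with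
      | _ a b =>
        intro heH
        have hadj' : H.Adj a b := SimpleGraph.Subgraph.mem_edgeSet.mp heH
        have hab : a ≠ b := hadj'.ne
        have haH : a ∈ H.verts := hadj'.fst_mem
        have hbH : b ∈ H.verts := hadj'.snd_mem
        rw [SimpleGraph.Walk.edges_append, List.mem_append] at he
        rcases he with he | he
        · have haA : a ∈ A.support := SimpleGraph.Walk.fst_mem_support_of_mem_edges A he
          have hbA : b ∈ A.support := SimpleGraph.Walk.snd_mem_support_of_mem_edges A he
          have := hmeet' a (hAC a haA) haH
          have := hmeet' b (hAC b hbA) hbH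
          exact hab (by grind)
        · have haP : a ∈ P.support := SimpleGraph.Walk.fst_mem_support_of_mem_edges P he
          have hbP : b ∈ P.support := SimpleGraph.Walk.snd_mem_support_of_mem_edges P he
          have haz : a = z := by
            by_contra h
            exact hintH a haP h haH
          have hbz : b = z := by
            by_contra h
            exact hintH b hbP h hbH
          exact hab (haz.trans hbz.symm)
    · -- odd length
      rw [SimpleGraph.Walk.length_append]
      exact hAodd
  -- choose the arc of the right parity
  by_cases hpar : Odd (A₁.length + P.length)
  · exact ⟨A₁, hA₁path, fun w hw => (hmemrot w).mp (C'.support_takeUntil_subset huC' hw), hpar⟩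
  · refine ⟨A₂.reverse, hA₂path.reverse, ?_, ?_⟩
    · intro w hw
      rw [SimpleGraph.Walk.support_reverse, List.mem_reverse] at hw
      exact (hmemrot w).mp (C'.support_dropUntil_subset huC' hw)
    · rw [SimpleGraph.Walk.length_reverse]
      rw [Nat.odd_iff] at hCodd ⊢
      rw [Nat.odd_iff] at hpar
      omega
end

section
/- Let c be a safely rainbow-connecting colouring of a connected graph H with at least 3 vertices using at least 2 colours, and let P be an H-path of odd length in a supergraph. Then the continuation colouring c' of c to H ∪ P - which colours the 2k+1 edges of P in order by a_1, …, a_k, γ, a_1, …, a_k where γ ∈ im(c) and a_1, …, a_k are distinct colours not in im(c) - is safely rainbow-connecting on H ∪ P. -/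
open SimpleGraph


namespace ContAux
variable {V : Type*} {G : SimpleGraph V}

/-- prefix of a walk by index -/
def wtake : ∀ {u v : V} (p : G.Walk u v) (n : ℕ), G.Walk u (p.getVert n)
  | _, _, .nil, _ => .nil
  | _, _, .cons _ _, 0 => .nil
  | _, _, .cons h p, n+1 => .cons h (wtake p n)

/-- suffix of a walk by index -/
def wdrop : ∀ {u v : V} (p : G.Walk u v) (n : ℕ), G.Walk (p.getVert n) v
  | _, _, .nil, _ => .nil
  | _, _, .cons h p, 0 => .cons h p
  | _, _, .cons _ p, n+1 => wdrop p n

lemma edges_wtake {u v : V} (p : G.Walk u v) (n : ℕ) :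
    (wtake p n).edges = p.edges.take n := by
  induction p generalizing n with
  | nil => simp [wtake]
  | cons h p ih => cases n with
    | zero => rfl
    | succ n => simp [wtake, ih]

lemma edges_wdrop {u v : V} (p : G.Walk u v) (n : ℕ) :
    (wdrop p n).edges = p.edges.drop n := by
  induction p generalizing n with
  | nil => simp [wdrop]
  | cons h p ih => cases n with
    | zero => rfl
    | succ n => simp [wdrop, ih]

lemma getVert_wdrop {u v : V} (p : G.Walk u v) (n m : ℕ) :
    (wdrop p n).getVert m = p.getVert (n + m) := by
  induction p generalizing n with
  | nil => simp [wdrop, Walk.getVert]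
  | cons h p ih => cases n with
    | zero => simp only [Nat.zero_add]; rfl
    | succ n =>
      show (wdrop p n).getVert m = (Walk.cons h p).getVert (n + 1 + m)
      rw [ih]
      have : n + 1 + m = (n + m) + 1 := by omega
      rw [this, Walk.getVert_cons_succ]

lemma length_wdrop {u v : V} (p : G.Walk u v) (n : ℕ) :
    (wdrop p n).length = p.length - n := by
  induction p generalizing n with
  | nil => simp [wdrop]
  | cons h p ih => cases n with
    | zero => rfl
    | succ n => simp [wdrop, ih]

lemma mem_support_wtake {u v w : V} (p : G.Walk u v) (n : ℕ)
    (hw : w ∈ (wtake p n).support) : ∃ m, m ≤ n ∧ m ≤ p.length ∧ p.getVert m = w := by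
  induction p generalizing n with
  | nil =>
    refine ⟨0, by omega, by simp, ?_⟩
    simp only [wtake, Walk.support_nil, List.mem_singleton] at hw
    simp [Walk.getVert]; exact (List.mem_singleton.mp hw).symm
  | cons h p ih =>
    cases n with
    | zero =>
      refine ⟨0, le_rfl, by simp, ?_⟩
      simp only [wtake, Walk.support_nil, List.mem_singleton] at hw
      simp [Walk.getVert_zero]; exact (List.mem_singleton.mp hw).symm
    | succ n =>
      rw [wtake] at hw; erw [Walk.support_cons, List.mem_cons] at hw
      rcases hw with rfl | hw
      · exact ⟨0, by omega, by simp, by simp [Walk.getVert_zero]⟩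
      · obtain ⟨m, h1, h2, h3⟩ := ih _ hw
        exact ⟨m + 1, by omega, by simp; omega, by rwa [Walk.getVert_cons_succ]⟩

lemma mem_support_wdrop {u v w : V} (p : G.Walk u v) (n : ℕ) (hn : n ≤ p.length)
    (hw : w ∈ (wdrop p n).support) : ∃ m, n ≤ m ∧ m ≤ p.length ∧ p.getVert m = w := by
  induction p generalizing n with
  | nil =>
    refine ⟨0, by simpa using hn, by simp, ?_⟩
    simp only [wdrop, Walk.support_nil, List.mem_singleton] at hw
    simp [Walk.getVert]; exact (List.mem_singleton.mp hw).symm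
  | cons h p ih =>
    cases n with
    | zero =>
      rw [Walk.mem_support_iff_exists_getVert] at hw
      obtain ⟨m, h1, h2⟩ := hw
      exact ⟨m, by omega, h2, h1⟩
    | succ n =>
      obtain ⟨m, h1, h2, h3⟩ := ih _ (by simpa using hn) hw
      exact ⟨m + 1, by omega, by simp; omega, by rwa [Walk.getVert_cons_succ]⟩

lemma isPath_wtake {u v : V} {p : G.Walk u v} (hp : p.IsPath) (n : ℕ) :
    (wtake p n).IsPath := by
  induction p generalizing n with
  | nil => cases n <;> exact hp
  | cons h p ih =>
    cases n with
    | zero => exact Walk.IsPath.nil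
    | succ n =>
      show (Walk.cons h (wtake p n)).IsPath
      rw [Walk.cons_isPath_iff] at hp ⊢
      refine ⟨ih hp.1 n, fun hc => hp.2 ?_⟩
      obtain ⟨m, _, h2, h3⟩ := mem_support_wtake _ _ hc
      rw [← h3]
      exact Walk.mem_support_iff_exists_getVert.mpr ⟨m, rfl, h2⟩

lemma isPath_wdrop {u v : V} {p : G.Walk u v} (hp : p.IsPath) (n : ℕ) :
    (wdrop p n).IsPath := by
  induction p generalizing n with
  | nil => cases n <;> exact hp
  | cons h p ih =>
    cases n with
    | zero => exact hp
    | succ n => exact ih hp.of_cons n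

lemma isPath_append' {u v w : V} {p : G.Walk u v} {q : G.Walk v w}
    (hp : p.IsPath) (hq : q.IsPath)
    (h : ∀ x, x ∈ p.support → x ∈ q.support → x = v) : (p.append q).IsPath := by
  rw [Walk.isPath_def, Walk.support_append, List.nodup_append]
  refine ⟨hp.support_nodup, (q.support.tail_sublist).nodup hq.support_nodup, ?_⟩
  intro x hxp y hxt hxy
  subst hxy
  have hx := h x hxp (List.mem_of_mem_tail hxt)
  subst hx
  have := hq.support_nodup
  rw [q.support_eq_cons, List.nodup_cons] at this
  exact this.1 hxt

lemma getVert_injective {u v : V} {p : G.Walk u v} (hp : p.IsPath) :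
    ∀ m m', m ≤ p.length → m' ≤ p.length → p.getVert m = p.getVert m' → m = m' := by
  induction p with
  | nil => intro m m' hm hm' _; simp at hm hm'; omega
  | cons h p ih =>
    intro m m' hm hm' heq
    rw [Walk.cons_isPath_iff] at hp
    simp only [Walk.length_cons] at hm hm'
    cases m with
    | zero =>
      cases m' with
      | zero => rfl
      | succ n' =>
        exfalso
        rw [Walk.getVert_zero, Walk.getVert_cons_succ] at heq
        apply hp.2
        rw [heq]
        exact Walk.mem_support_iff_exists_getVert.mpr ⟨n', rfl, by omega⟩
    | succ n =>
      cases m' with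
      | zero =>
        exfalso
        rw [Walk.getVert_zero, Walk.getVert_cons_succ] at heq
        apply hp.2
        rw [← heq]
        exact Walk.mem_support_iff_exists_getVert.mpr ⟨n, rfl, by omega⟩
      | succ n' =>
        rw [Walk.getVert_cons_succ, Walk.getVert_cons_succ] at heq
        have := ih hp.1 n n' (by omega) (by omega) heq
        omega

/-- all vertices of a walk whose edges lie in a subgraph and whose end lies in the
subgraph are in the subgraph -/
lemma support_subset_verts (K : G.Subgraph) {x y : V} (q : G.Walk x y) (hy : y ∈ K.verts)
    (he : ∀ e ∈ q.edges, e ∈ K.edgeSet) : ∀ w ∈ q.support, w ∈ K.verts := by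
  induction q with
  | nil => intro w hw; rwa [Walk.mem_support_nil_iff.mp hw]
  | @cons a b d h q ih =>
    intro w hw
    rw [Walk.support_cons, List.mem_cons] at hw
    rcases hw with rfl | hw
    · have hadj : K.Adj w b := (Subgraph.mem_edgeSet).mp (he s(w, b) (by simp))
      exact hadj.fst_mem
    · exact ih hy (fun e hee => he e (by simp [hee])) w hw

end ContAux


/-- A colouring is rainbow-connecting on a subgraph `K` of `G`. -/
def RainbowConnectingOn {V : Type*} (G : SimpleGraph V) (K : G.Subgraph)
    (c : Sym2 V → ℕ) : Prop :=
  ∀ u ∈ K.verts, ∀ v ∈ K.verts,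
    ∃ p : G.Walk u v, p.IsPath ∧ (∀ e ∈ p.edges, e ∈ K.edgeSet) ∧ (p.edges.map c).Nodup

/-- `y` is blocked for `x`: every rainbow `xy`-path in `K` is blocking, i.e.
uses every colour in the image of `c`. -/
def BlockedFor {V : Type*} (G : SimpleGraph V) (K : G.Subgraph) (c : Sym2 V → ℕ)
    (x y : V) : Prop :=
  ∀ p : G.Walk x y, p.IsPath → (∀ e ∈ p.edges, e ∈ K.edgeSet) → (p.edges.map c).Nodup →
    ∀ col ∈ c '' K.edgeSet, col ∈ p.edges.map c

/-- A colouring is safe: every vertex has at most one blocked vertex. -/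
def SafeColouring {V : Type*} (G : SimpleGraph V) (K : G.Subgraph) (c : Sym2 V → ℕ) : Prop :=
  ∀ x ∈ K.verts, Set.Subsingleton {y | y ∈ K.verts ∧ BlockedFor G K c x y}

/-- Safely rainbow-connecting colouring of the subgraph `K`. -/
def SafelyRainbowConnecting {V : Type*} (G : SimpleGraph V) (K : G.Subgraph)
    (c : Sym2 V → ℕ) : Prop :=
  RainbowConnectingOn G K c ∧ SafeColouring G K c

/-- Continuation of a safely rainbow-connecting colouring along an odd `H`-path is
safely rainbow-connecting: if `P` has length `2k+1` and its edges are coloured in order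
by `a_1, …, a_k, γ, a_1, …, a_k` with fresh distinct colours `a_i` and `γ ∈ im c`,
then the resulting colouring of `H ∪ P` is safely rainbow-connecting. -/
theorem continuation_odd_safely_rainbow {V : Type*} (G : SimpleGraph V)
    (H : G.Subgraph) (hH : H.Connected) (hcard : 3 ≤ H.verts.ncard)
    (c : Sym2 V → ℕ) (hc : SafelyRainbowConnecting G H c)
    (him : 2 ≤ (c '' H.edgeSet).ncard)
    (k : ℕ) {u v : V} (P : G.Walk u v) (hP : IsHPathWalk G H P)
    (hlen : P.length = 2 * k + 1)
    (γ : ℕ) (hγ : γ ∈ c '' H.edgeSet)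
    (a : Fin k → ℕ) (ha : Function.Injective a)
    (hfresh : ∀ i, a i ∉ c '' H.edgeSet)
    (c' : Sym2 V → ℕ)
    (hagree : ∀ e ∈ H.edgeSet, c' e = c e)
    (hcol : ∀ i : ℕ, ∀ hi : i < 2 * k + 1,
      c' (P.edges.get ⟨i, by simpa [hlen] using hi⟩) =
        if h : i < k then a ⟨i, h⟩
        else if h2 : i = k then γ
        else a ⟨i - (k + 1), by omega⟩) :
    SafelyRainbowConnecting G (H ⊔ P.toSubgraph) c' := by
  classical
  obtain ⟨hrc, hsafe⟩ := hc
  obtain ⟨hPpath, hPlen0, huH, hvH, hintern, hPedge⟩ := hP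
  set K := H ⊔ P.toSubgraph with hK
  set C := c '' H.edgeSet with hCdef
  set N := 2 * k + 1 with hN
  have hlen' : P.length = N := hlen
  have hedlen : P.edges.length = N := by rw [SimpleGraph.Walk.length_edges, hlen']
  have huv : u ≠ v := by
    intro h
    subst h
    rw [SimpleGraph.Walk.isPath_iff_eq_nil] at hPpath
    rw [hPpath] at hlen'
    simp [hN] at hlen'
  have hginj : ∀ m m', m ≤ N → m' ≤ N → P.getVert m = P.getVert m' → m = m' := by
    intro m m' hm hm' heq
    exact ContAux.getVert_injective hPpath m m' (by omega) (by omega) heq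
  have hvN : P.getVert N = v := by
    rw [← hlen']; exact SimpleGraph.Walk.getVert_length P
  have hmemP : ∀ m, m ≤ N → P.getVert m ∈ P.support := by
    intro m hm
    exact SimpleGraph.Walk.mem_support_iff_exists_getVert.mpr ⟨m, rfl, by omega⟩
  have hintern' : ∀ m, 0 < m → m < N → P.getVert m ∉ H.verts := by
    intro m h1 h2
    refine hintern _ (hmemP m (by omega)) ?_ ?_
    · intro he
      have h0 : P.getVert m = P.getVert 0 := by rw [he, SimpleGraph.Walk.getVert_zero]
      have := hginj m 0 (by omega) (by omega) h0
      omega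
    · intro he
      have h0 : P.getVert m = P.getVert N := by rw [he, hvN]
      have := hginj m N (by omega) (by omega) h0
      omega
  -- the colour sequence along P
  set f : ℕ → ℕ := fun m =>
    if h : m < k then a ⟨m, h⟩ else if m = k then γ
    else if h : m - (k+1) < k then a ⟨m - (k+1), h⟩ else 0 with hf
  have hLf : P.edges.map c' = (List.range N).map f := by
    apply List.ext_getElem (by simp [hedlen])
    intro i h1 h2
    have hiN : i < N := by simpa [hedlen] using h1
    rw [List.getElem_map, List.getElem_map, List.getElem_range]
    have hco := hcol i (by omega)
    rw [List.get_eq_getElem] at hco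
    rw [hco]
    by_cases hik : i < k
    · simp [hf, hik]
    · by_cases hik2 : i = k
      · simp [hf, hik, hik2]
      · have h3 : i - (k+1) < k := by omega
        simp [hf, hik, hik2, h3]
  have hδ : ∃ δ, δ ∈ C ∧ δ ≠ γ := by
    obtain ⟨b, hb1, hb2⟩ := Set.exists_ne_of_one_lt_ncard (s := C) (by omega) γ
    exact ⟨b, hb1, hb2⟩
  have hfval_lt : ∀ m (h : m < k), f m = a ⟨m, h⟩ := by
    intro m h; simp [hf, h]
  have hfval_k : f k = γ := by simp [hf]
  have hfval_gt : ∀ m, k < m → m < N → ∃ h : m - (k+1) < k, f m = a ⟨m - (k+1), h⟩ := by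
    intro m h1 h2
    have h3 : m - (k+1) < k := by omega
    have h5 : ¬ m < k := by omega
    have h6 : ¬ m = k := by omega
    exact ⟨h3, by simp [hf, h5, h6, h3]⟩
  have hfA : ∀ m, m < N → m ≠ k → ∃ r : Fin k, f m = a r := by
    intro m h1 h2
    rcases Nat.lt_or_ge m k with h | h
    · exact ⟨⟨m, h⟩, hfval_lt m h⟩
    · obtain ⟨h3, h4⟩ := hfval_gt m (by omega) h1
      exact ⟨⟨m - (k+1), h3⟩, h4⟩
  have hfnotC : ∀ m, m < N → m ≠ k → f m ∉ C := by
    intro m h1 h2 hmem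
    obtain ⟨r, hr⟩ := hfA m h1 h2
    rw [hr] at hmem
    exact hfresh r hmem
  have hcoll : ∀ m m', m < m' → m' < N → f m = f m' → m' = m + (k+1) := by
    intro m m' h1 h2 heq
    by_cases hm : m < k
    · rw [hfval_lt m hm] at heq
      by_cases hm' : m' < k
      · rw [hfval_lt m' hm'] at heq
        have := ha heq
        have := Fin.mk.injEq .. ▸ this
        omega
      · by_cases hm'k : m' = k
        · subst hm'k
          rw [hfval_k] at heq
          exact absurd (heq ▸ hγ) (hfresh _)
        · obtain ⟨h3, h4⟩ := hfval_gt m' (by omega) h2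
          rw [h4] at heq
          have := ha heq
          simp only [Fin.mk.injEq] at this
          omega
    · by_cases hmk : m = k
      · subst hmk
        obtain ⟨h3, h4⟩ := hfval_gt m' (by omega) h2
        rw [hfval_k, h4] at heq
        exact absurd (heq ▸ hγ) (hfresh _)
      · obtain ⟨h3, h4⟩ := hfval_gt m (by omega) (by omega)
        obtain ⟨h3', h4'⟩ := hfval_gt m' (by omega) h2
        rw [h4, h4'] at heq
        have := ha heq
        simp only [Fin.mk.injEq] at this
        omega
  have hγnotA : ∀ m, m < N → m ≠ k → f m ≠ γ := by
    intro m h1 h2 he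
    exact hfnotC m h1 h2 (he ▸ hγ)
  -- edge sets
  have hHK : ∀ e ∈ H.edgeSet, e ∈ K.edgeSet := by
    intro e he
    rw [hK, SimpleGraph.Subgraph.edgeSet_sup]
    exact Or.inl he
  have hPK : ∀ e ∈ P.edges, e ∈ K.edgeSet := by
    intro e he
    rw [hK, SimpleGraph.Subgraph.edgeSet_sup]
    exact Or.inr ((SimpleGraph.Walk.mem_edges_toSubgraph P).mpr he)
  have himC : ∀ δ ∈ C, δ ∈ c' '' K.edgeSet := by
    rintro δ ⟨e, he, rfl⟩
    exact ⟨e, hHK e he, hagree e he⟩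
  have himF : ∀ m, m < N → f m ∈ c' '' K.edgeSet := by
    intro m hm
    have hm' : m < P.edges.length := by omega
    refine ⟨P.edges[m], hPK _ (List.getElem_mem hm'), ?_⟩
    have h3 := List.getElem_of_eq hLf (show m < (P.edges.map c').length by simpa using hm')
    simpa using h3
  -- windows of colours
  set W : ℕ → ℕ → List ℕ := fun i j => (List.range (j - i)).map (fun m => f (i + m)) with hW
  have hWmem : ∀ i j x, x ∈ W i j ↔ ∃ m, i ≤ m ∧ m < j ∧ f m = x := by
    intro i j x
    simp only [hW, List.mem_map, List.mem_range]
    constructor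
    · rintro ⟨m, hm, rfl⟩
      exact ⟨i + m, by omega, by omega, rfl⟩
    · rintro ⟨m, h1, h2, rfl⟩
      refine ⟨m - i, by omega, ?_⟩
      congr 1
      omega
  have hWnodup : ∀ i j, j ≤ i + (k+1) → j ≤ N → (W i j).Nodup := by
    intro i j h1 h2
    apply List.Nodup.map_on ?_ List.nodup_range
    intro x hx y hy heq
    simp only [List.mem_range] at hx hy
    by_contra hne
    rcases lt_trichotomy x y with h | h | h
    · have := hcoll (i+x) (i+y) (by omega) (by omega) heq
      omega
    · exact hne h
    · have := hcoll (i+y) (i+x) (by omega) (by omega) heq.symm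
      omega
  have hW0 : ∀ i, W 0 i = (List.range i).map f := by
    intro i; simp [hW]
  have hpreW : ∀ i, i ≤ N → (ContAux.wtake P i).edges.map c' = W 0 i := by
    intro i hi
    rw [ContAux.edges_wtake, List.map_take, hLf, ← List.map_take, List.take_range,
      Nat.min_eq_left hi, hW0]
  have hdroprange : ∀ j, j ≤ N → (List.range N).drop j = (List.range (N - j)).map (fun m => j + m) := by
    intro j hj
    apply List.ext_getElem (by simp)
    intro i h1 h2
    simp
  have hsufW : ∀ j, j ≤ N → (ContAux.wdrop P j).edges.map c' = W j N := by
    intro j hj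
    rw [ContAux.edges_wdrop, List.map_drop, hLf, ← List.map_drop, hdroprange j hj,
      List.map_map, hW]
    rfl
  have hpreS : ∀ (i : ℕ) (w : V), w ∈ (ContAux.wtake P i).support → ∃ m, m ≤ i ∧ m ≤ N ∧ P.getVert m = w := by
    intro i w hw
    obtain ⟨m, h1, h2, h3⟩ := ContAux.mem_support_wtake P i hw
    exact ⟨m, h1, by omega, h3⟩
  have hsufS : ∀ (j : ℕ), j ≤ N → ∀ (w : V), w ∈ (ContAux.wdrop P j).support → ∃ m, j ≤ m ∧ m ≤ N ∧ P.getVert m = w := by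
    intro j hj w hw
    obtain ⟨m, h1, h2, h3⟩ := ContAux.mem_support_wdrop P j (by omega) hw
    exact ⟨m, h1, by omega, h3⟩
  -- middle segments
  have hmid : ∀ i j, i ≤ j → j ≤ N → ∃ R : G.Walk (P.getVert i) (P.getVert j),
      R.IsPath ∧ (∀ e ∈ R.edges, e ∈ K.edgeSet) ∧ R.edges.map c' = W i j ∧
      (∀ w ∈ R.support, ∃ m, i ≤ m ∧ m ≤ j ∧ P.getVert m = w) := by
    intro i j hij hjN
    have hgv : (ContAux.wdrop P i).getVert (j - i) = P.getVert j := by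
      rw [ContAux.getVert_wdrop]
      congr 1
      omega
    refine ⟨(ContAux.wtake (ContAux.wdrop P i) (j-i)).copy rfl hgv, ?_, ?_, ?_, ?_⟩
    · rw [SimpleGraph.Walk.isPath_copy]
      exact ContAux.isPath_wtake (ContAux.isPath_wdrop hPpath i) _
    · intro e he
      rw [SimpleGraph.Walk.edges_copy, ContAux.edges_wtake, ContAux.edges_wdrop] at he
      exact hPK e (List.mem_of_mem_drop (List.mem_of_mem_take he))
    · rw [SimpleGraph.Walk.edges_copy, ContAux.edges_wtake, List.map_take, hsufW i (by omega), hW]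
      rw [← List.map_take, List.take_range, Nat.min_eq_left (show j - i ≤ N - i by omega)]
    · intro w hw
      rw [SimpleGraph.Walk.support_copy] at hw
      obtain ⟨m, h1, h2, h3⟩ := ContAux.mem_support_wtake _ _ hw
      rw [ContAux.getVert_wdrop] at h3
      exact ⟨i + m, by omega, by omega, h3⟩
  -- walks inside H
  have hqmap : ∀ {x y : V} (q : G.Walk x y), (∀ e ∈ q.edges, e ∈ H.edgeSet) →
      q.edges.map c' = q.edges.map c := by
    intro x y q hq
    exact List.map_congr_left fun e he => hagree e (hq e he)
  have hqC : ∀ {x y : V} (q : G.Walk x y), (∀ e ∈ q.edges, e ∈ H.edgeSet) →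
      ∀ col ∈ q.edges.map c', col ∈ C := by
    intro x y q hq col hcolm
    rw [hqmap q hq] at hcolm
    obtain ⟨e, he, rfl⟩ := List.mem_map.mp hcolm
    exact ⟨e, hq e he, rfl⟩
  have hold : ∀ x ∈ H.verts, ∀ y ∈ H.verts, ∃ q : G.Walk x y, q.IsPath ∧
      (∀ e ∈ q.edges, e ∈ H.edgeSet) ∧ (q.edges.map c').Nodup ∧
      (∀ w ∈ q.support, w ∈ H.verts) := by
    intro x hx y hy
    obtain ⟨q, h1, h2, h3⟩ := hrc x hx y hy
    exact ⟨q, h1, h2, by rw [hqmap q h2]; exact h3, ContAux.support_subset_verts H q hy h2⟩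
  -- disjointness of H-colours from fresh windows
  have hWnotC : ∀ i j col, j ≤ N → (k < i ∨ j ≤ k) → col ∈ W i j → col ∉ C := by
    intro i j col hj hk hcolW hcolC
    obtain ⟨m, h1, h2, rfl⟩ := (hWmem i j col).mp hcolW
    exact hfnotC m (by omega) (by omega) hcolC
  have hdisj : ∀ {x y : V} (q : G.Walk x y), (∀ e ∈ q.edges, e ∈ H.edgeSet) →
      ∀ i j, j ≤ N → (k < i ∨ j ≤ k) → (q.edges.map c').Disjoint (W i j) := by
    intro x y q hq i j hj hk col hcolq hcolW
    exact hWnotC i j col hj hk hcolW (hqC q hq col hcolq)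
  -- extension lemma: H-walk to u, then along the prefix of P
  have hExtU : ∀ {x : V} (q : G.Walk x u), q.IsPath → (∀ e ∈ q.edges, e ∈ H.edgeSet) →
      (q.edges.map c').Nodup → ∀ i, i ≤ k →
      ∃ R : G.Walk x (P.getVert i), R.IsPath ∧ (∀ e ∈ R.edges, e ∈ K.edgeSet) ∧
        R.edges.map c' = q.edges.map c' ++ W 0 i ∧ (R.edges.map c').Nodup := by
    intro x q hq hqe hqn i hik
    have hcolours : (q.append (ContAux.wtake P i)).edges.map c' = q.edges.map c' ++ W 0 i := by
      rw [SimpleGraph.Walk.edges_append, List.map_append, hpreW i (by omega)]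
    refine ⟨q.append (ContAux.wtake P i), ?_, ?_, hcolours, ?_⟩
    · apply ContAux.isPath_append' hq (ContAux.isPath_wtake hPpath i)
      intro z hz1 hz2
      have hzH : z ∈ H.verts := ContAux.support_subset_verts H q huH hqe z hz1
      obtain ⟨m, hm1, hm2, hm3⟩ := hpreS i z hz2
      by_cases hm0 : m = 0
      · rw [← hm3, hm0, SimpleGraph.Walk.getVert_zero]
      · exact absurd (hm3 ▸ hzH) (hintern' m (by omega) (by omega))
    · intro e he
      rw [SimpleGraph.Walk.edges_append, List.mem_append] at he
      rcases he with he | he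
      · exact hHK e (hqe e he)
      · rw [ContAux.edges_wtake] at he
        exact hPK e (List.mem_of_mem_take he)
    · rw [hcolours]
      exact List.Nodup.append hqn (hWnodup 0 i (by omega) (by omega))
        (hdisj q hqe 0 i (by omega) (by omega))
  -- extension lemma: H-walk to v, then along the reversed suffix of P
  have hExtV : ∀ {x : V} (q : G.Walk x v), q.IsPath → (∀ e ∈ q.edges, e ∈ H.edgeSet) →
      (q.edges.map c').Nodup → ∀ j, k + 1 ≤ j → j ≤ N →
      ∃ R : G.Walk x (P.getVert j), R.IsPath ∧ (∀ e ∈ R.edges, e ∈ K.edgeSet) ∧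
        R.edges.map c' = q.edges.map c' ++ (W j N).reverse ∧ (R.edges.map c').Nodup := by
    intro x q hq hqe hqn j hj1 hj2
    have hsufRev : (ContAux.wdrop P j).reverse.edges.map c' = (W j N).reverse := by
      rw [SimpleGraph.Walk.edges_reverse, List.map_reverse, hsufW j (by omega)]
    have hcolours : (q.append (ContAux.wdrop P j).reverse).edges.map c'
        = q.edges.map c' ++ (W j N).reverse := by
      rw [SimpleGraph.Walk.edges_append, List.map_append, hsufRev]
    refine ⟨q.append (ContAux.wdrop P j).reverse, ?_, ?_, hcolours, ?_⟩
    · apply ContAux.isPath_append' hq ((ContAux.isPath_wdrop hPpath j).reverse)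
      intro z hz1 hz2
      have hzH : z ∈ H.verts := ContAux.support_subset_verts H q hvH hqe z hz1
      rw [SimpleGraph.Walk.support_reverse, List.mem_reverse] at hz2
      obtain ⟨m, hm1, hm2, hm3⟩ := hsufS j (by omega) z hz2
      by_cases hmN : m = N
      · rw [← hm3, hmN, hvN]
      · exact absurd (hm3 ▸ hzH) (hintern' m (by omega) (by omega))
    · intro e he
      rw [SimpleGraph.Walk.edges_append, List.mem_append] at he
      rcases he with he | he
      · exact hHK e (hqe e he)
      · rw [SimpleGraph.Walk.edges_reverse, List.mem_reverse, ContAux.edges_wdrop] at he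
        exact hPK e (List.mem_of_mem_drop he)
    · rw [hcolours]
      refine List.Nodup.append hqn (List.nodup_reverse.mpr (hWnodup j N (by omega) (by omega))) ?_
      intro col hcolq hcolW
      rw [List.mem_reverse] at hcolW
      exact hdisj q hqe j N (by omega) (by omega) hcolq hcolW
  -- extension lemma: reversed prefix of P, then an H-walk from u
  have hExtU' : ∀ {y : V} (q : G.Walk u y), y ∈ H.verts → q.IsPath →
      (∀ e ∈ q.edges, e ∈ H.edgeSet) → (q.edges.map c').Nodup → ∀ i, i ≤ k →
      ∃ R : G.Walk (P.getVert i) y, R.IsPath ∧ (∀ e ∈ R.edges, e ∈ K.edgeSet) ∧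
        R.edges.map c' = (W 0 i).reverse ++ q.edges.map c' ∧ (R.edges.map c').Nodup ∧
        (∀ w ∈ R.support, w ∈ H.verts ∨ ∃ m, m ≤ i ∧ P.getVert m = w) := by
    intro y q hy hq hqe hqn i hik
    have hpreRev : (ContAux.wtake P i).reverse.edges.map c' = (W 0 i).reverse := by
      rw [SimpleGraph.Walk.edges_reverse, List.map_reverse, hpreW i (by omega)]
    have hcolours : ((ContAux.wtake P i).reverse.append q).edges.map c'
        = (W 0 i).reverse ++ q.edges.map c' := by
      rw [SimpleGraph.Walk.edges_append, List.map_append, hpreRev]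
    refine ⟨(ContAux.wtake P i).reverse.append q, ?_, ?_, hcolours, ?_, ?_⟩
    · apply ContAux.isPath_append' ((ContAux.isPath_wtake hPpath i).reverse) hq
      intro z hz1 hz2
      have hzH : z ∈ H.verts := ContAux.support_subset_verts H q hy hqe z hz2
      rw [SimpleGraph.Walk.support_reverse, List.mem_reverse] at hz1
      obtain ⟨m, hm1, hm2, hm3⟩ := hpreS i z hz1
      by_cases hm0 : m = 0
      · rw [← hm3, hm0, SimpleGraph.Walk.getVert_zero]
      · exact absurd (hm3 ▸ hzH) (hintern' m (by omega) (by omega))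
    · intro e he
      rw [SimpleGraph.Walk.edges_append, List.mem_append] at he
      rcases he with he | he
      · rw [SimpleGraph.Walk.edges_reverse, List.mem_reverse, ContAux.edges_wtake] at he
        exact hPK e (List.mem_of_mem_take he)
      · exact hHK e (hqe e he)
    · rw [hcolours]
      refine List.Nodup.append (List.nodup_reverse.mpr (hWnodup 0 i (by omega) (by omega)))
        hqn ?_
      intro col hcolW hcolq
      rw [List.mem_reverse] at hcolW
      exact hdisj q hqe 0 i (by omega) (by omega) hcolq hcolW
    · intro w hw
      rw [SimpleGraph.Walk.mem_support_append_iff] at hw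
      rcases hw with hw | hw
      · rw [SimpleGraph.Walk.support_reverse, List.mem_reverse] at hw
        obtain ⟨m, hm1, hm2, hm3⟩ := hpreS i w hw
        exact Or.inr ⟨m, hm1, hm3⟩
      · exact Or.inl (ContAux.support_subset_verts H q hy hqe w hw)
  -- extension lemma: suffix of P, then an H-walk from v
  have hExtV' : ∀ {y : V} (q : G.Walk v y), y ∈ H.verts → q.IsPath →
      (∀ e ∈ q.edges, e ∈ H.edgeSet) → (q.edges.map c').Nodup → ∀ j, k + 1 ≤ j → j ≤ N →
      ∃ R : G.Walk (P.getVert j) y, R.IsPath ∧ (∀ e ∈ R.edges, e ∈ K.edgeSet) ∧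
        R.edges.map c' = W j N ++ q.edges.map c' ∧ (R.edges.map c').Nodup := by
    intro y q hy hq hqe hqn j hj1 hj2
    have hcolours : ((ContAux.wdrop P j).append q).edges.map c'
        = W j N ++ q.edges.map c' := by
      rw [SimpleGraph.Walk.edges_append, List.map_append, hsufW j (by omega)]
    refine ⟨(ContAux.wdrop P j).append q, ?_, ?_, hcolours, ?_⟩
    · apply ContAux.isPath_append' (ContAux.isPath_wdrop hPpath j) hq
      intro z hz1 hz2
      have hzH : z ∈ H.verts := ContAux.support_subset_verts H q hy hqe z hz2
      obtain ⟨m, hm1, hm2, hm3⟩ := hsufS j (by omega) z hz1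
      by_cases hmN : m = N
      · rw [← hm3, hmN, hvN]
      · exact absurd (hm3 ▸ hzH) (hintern' m (by omega) (by omega))
    · intro e he
      rw [SimpleGraph.Walk.edges_append, List.mem_append] at he
      rcases he with he | he
      · rw [ContAux.edges_wdrop] at he
        exact hPK e (List.mem_of_mem_drop he)
      · exact hHK e (hqe e he)
    · rw [hcolours]
      refine List.Nodup.append (hWnodup j N (by omega) (by omega)) hqn ?_
      intro col hcolW hcolq
      exact hdisj q hqe j N (by omega) (by omega) hcolq hcolW
  -- the long way round: reversed prefix, H-walk from u to v, reversed suffix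
  have hTriple : ∀ (q : G.Walk u v), q.IsPath → (∀ e ∈ q.edges, e ∈ H.edgeSet) →
      (q.edges.map c').Nodup → ∀ i j, i + (k + 1) < j → j ≤ N →
      ∃ R : G.Walk (P.getVert i) (P.getVert j), R.IsPath ∧
        (∀ e ∈ R.edges, e ∈ K.edgeSet) ∧
        R.edges.map c' = ((W 0 i).reverse ++ q.edges.map c') ++ (W j N).reverse ∧
        (R.edges.map c').Nodup := by
    intro q hq hqe hqn i j hij hjN
    have hik : i ≤ k := by omega
    obtain ⟨S, hS1, hS2, hS3, hS4, hS5⟩ := hExtU' q hvH hq hqe hqn i hik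
    have hsufRev : (ContAux.wdrop P j).reverse.edges.map c' = (W j N).reverse := by
      rw [SimpleGraph.Walk.edges_reverse, List.map_reverse, hsufW j (by omega)]
    have hcolours : (S.append (ContAux.wdrop P j).reverse).edges.map c'
        = ((W 0 i).reverse ++ q.edges.map c') ++ (W j N).reverse := by
      rw [SimpleGraph.Walk.edges_append, List.map_append, hS3, hsufRev]
    refine ⟨S.append (ContAux.wdrop P j).reverse, ?_, ?_, hcolours, ?_⟩
    · apply ContAux.isPath_append' hS1 ((ContAux.isPath_wdrop hPpath j).reverse)
      intro z hz1 hz2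
      rw [SimpleGraph.Walk.support_reverse, List.mem_reverse] at hz2
      obtain ⟨m, hm1, hm2, hm3⟩ := hsufS j (by omega) z hz2
      by_cases hmN : m = N
      · rw [← hm3, hmN, hvN]
      · exfalso
        have hznH : z ∉ H.verts := hm3 ▸ hintern' m (by omega) (by omega)
        rcases hS5 z hz1 with hz | ⟨m', hm'1, hm'3⟩
        · exact hznH hz
        · have := hginj m m' (by omega) (by omega) (by rw [hm3, hm'3])
          omega
    · intro e he
      rw [SimpleGraph.Walk.edges_append, List.mem_append] at he
      rcases he with he | he
      · exact hS2 e he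
      · rw [SimpleGraph.Walk.edges_reverse, List.mem_reverse, ContAux.edges_wdrop] at he
        exact hPK e (List.mem_of_mem_drop he)
    · rw [hcolours]
      refine List.Nodup.append (hS3 ▸ hS4)
        (List.nodup_reverse.mpr (hWnodup j N (by omega) (by omega))) ?_
      intro col hcol1 hcol2
      rw [List.mem_reverse] at hcol2
      obtain ⟨m, hm1, hm2, rfl⟩ := (hWmem j N col).mp hcol2
      rw [List.mem_append] at hcol1
      rcases hcol1 with hcol1 | hcol1
      · rw [List.mem_reverse] at hcol1
        obtain ⟨m', hm'1, hm'2, hm'3⟩ := (hWmem 0 i (f m)).mp hcol1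
        have := hcoll m' m (by omega) (by omega) hm'3
        omega
      · exact hWnotC j N (f m) (by omega) (by omega) hcol2 (hqC q hqe (f m) hcol1)
  -- case analysis on vertices of K
  have hcase : ∀ w ∈ K.verts, w ∈ H.verts ∨ ∃ i, 0 < i ∧ i ≤ 2*k ∧ w = P.getVert i := by
    intro w hw
    rw [hK, SimpleGraph.Subgraph.verts_sup, Set.mem_union] at hw
    rcases hw with h | h
    · exact Or.inl h
    · rw [SimpleGraph.Walk.mem_verts_toSubgraph] at h
      obtain ⟨n, hn1, hn2⟩ := SimpleGraph.Walk.mem_support_iff_exists_getVert.mp h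
      by_cases h0 : n = 0
      · subst h0
        rw [SimpleGraph.Walk.getVert_zero] at hn1
        exact Or.inl (hn1 ▸ huH)
      · by_cases hNn : n = N
        · subst hNn
          rw [hvN] at hn1
          exact Or.inl (hn1 ▸ hvH)
        · exact Or.inr ⟨n, by omega, by omega, hn1.symm⟩
  have hRevBlocked : ∀ {x y : V}, BlockedFor G K c' x y → BlockedFor G K c' y x := by
    intro x y hb p hp hpe hpn col hcol
    have h2 : ∀ e ∈ p.reverse.edges, e ∈ K.edgeSet := by
      intro e he
      rw [SimpleGraph.Walk.edges_reverse, List.mem_reverse] at he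
      exact hpe e he
    have h3 : (p.reverse.edges.map c').Nodup := by
      rw [SimpleGraph.Walk.edges_reverse, List.map_reverse]
      exact List.nodup_reverse.mpr hpn
    have := hb p.reverse hp.reverse h2 h3 col hcol
    rwa [SimpleGraph.Walk.edges_reverse, List.map_reverse, List.mem_reverse] at this
  have hNotSelf : ∀ x : V, ¬ BlockedFor G K c' x x := by
    intro x hb
    have := hb SimpleGraph.Walk.nil SimpleGraph.Walk.IsPath.nil (by simp) (by simp)
      γ (himC γ hγ)
    simp at this
  have hIntNotBlocked : ∀ i j, 0 < i → i ≤ 2*k → 0 < j → j ≤ 2*k → i ≠ j →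
      ¬ BlockedFor G K c' (P.getVert i) (P.getVert j) := by
    have main : ∀ i j, 0 < i → j ≤ 2*k → i < j →
        ¬ BlockedFor G K c' (P.getVert i) (P.getVert j) := by
      intro i j hi1 hj2 hij hb
      by_cases hshort : j ≤ i + (k+1)
      · obtain ⟨R, hR1, hR2, hR3, _⟩ := hmid i j (by omega) (by omega)
        have hRn : (R.edges.map c').Nodup := by
          rw [hR3]; exact hWnodup i j (by omega) (by omega)
        by_cases hmidk : i ≤ k ∧ k < j
        · obtain ⟨δ, hδC, hδγ⟩ := hδ
          have := hb R hR1 hR2 hRn δ (himC δ hδC)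
          rw [hR3] at this
          obtain ⟨m, hm1, hm2, hm4⟩ := (hWmem i j δ).mp this
          by_cases hmk : m = k
          · exact hδγ (by rw [← hm4, hmk, hfval_k])
          · exact hfnotC m (by omega) hmk (hm4 ▸ hδC)
        · have := hb R hR1 hR2 hRn γ (himC γ hγ)
          rw [hR3] at this
          obtain ⟨m, hm1, hm2, hm4⟩ := (hWmem i j γ).mp this
          have hmk : m ≠ k := by
            rcases not_and_or.mp hmidk with h | h <;> omega
          exact hγnotA m (by omega) hmk hm4
      · obtain ⟨q, hq1, hq2, hq3, _⟩ := hold u huH v hvH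
        obtain ⟨R, hR1, hR2, hR3, hR4⟩ := hTriple q hq1 hq2 hq3 i j (by omega) (by omega)
        have := hb R hR1 hR2 hR4 (f i) (himF i (by omega))
        rw [hR3, List.mem_append, List.mem_append] at this
        rcases this with (h | h) | h
        · rw [List.mem_reverse] at h
          obtain ⟨m', hm'1, hm'2, hm'3⟩ := (hWmem 0 i (f i)).mp h
          have := hcoll m' i hm'2 (by omega) hm'3
          omega
        · exact hfnotC i (by omega) (by omega) (hqC q hq2 (f i) h)
        · rw [List.mem_reverse] at h
          obtain ⟨m, hm1, hm2, hm3⟩ := (hWmem j N (f i)).mp h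
          have := hcoll i m (by omega) (by omega) hm3.symm
          omega
    intro i j hi1 hi2 hj1 hj2 hne hb
    rcases Nat.lt_or_ge i j with h | h
    · exact main i j hi1 hj2 h hb
    · exact main j i hj1 hi2 (by omega) (hRevBlocked hb)
  -- blocked-transfer lemmas
  have blockU : ∀ {x : V}, BlockedFor G K c' x (P.getVert k) → BlockedFor G H c x u := by
    intro x hb q hq hqe hqn col hcol
    have hqn' : (q.edges.map c').Nodup := by rw [hqmap q hqe]; exact hqn
    obtain ⟨R, hR1, hR2, hR3, hR4⟩ := hExtU q hq hqe hqn' k le_rfl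
    have := hb R hR1 hR2 hR4 col (himC col hcol)
    rw [hR3, List.mem_append] at this
    rcases this with h | h
    · rwa [hqmap q hqe] at h
    · exact absurd hcol (hWnotC 0 k col (by omega) (by omega) h)
  have blockV : ∀ {x : V}, BlockedFor G K c' x (P.getVert (k+1)) → BlockedFor G H c x v := by
    intro x hb q hq hqe hqn col hcol
    have hqn' : (q.edges.map c').Nodup := by rw [hqmap q hqe]; exact hqn
    obtain ⟨R, hR1, hR2, hR3, hR4⟩ := hExtV q hq hqe hqn' (k+1) le_rfl (by omega)
    have := hb R hR1 hR2 hR4 col (himC col hcol)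
    rw [hR3, List.mem_append] at this
    rcases this with h | h
    · rwa [hqmap q hqe] at h
    · rw [List.mem_reverse] at h
      exact absurd hcol (hWnotC (k+1) N col (by omega) (by omega) h)
  have blockU' : ∀ {y : V}, y ∈ H.verts → BlockedFor G K c' (P.getVert k) y →
      BlockedFor G H c u y := by
    intro y hy hb q hq hqe hqn col hcol
    have hqn' : (q.edges.map c').Nodup := by rw [hqmap q hqe]; exact hqn
    obtain ⟨R, hR1, hR2, hR3, hR4, _⟩ := hExtU' q hy hq hqe hqn' k le_rfl
    have := hb R hR1 hR2 hR4 col (himC col hcol)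
    rw [hR3, List.mem_append] at this
    rcases this with h | h
    · rw [List.mem_reverse] at h
      exact absurd hcol (hWnotC 0 k col (by omega) (by omega) h)
    · rwa [hqmap q hqe] at h
  have blockV' : ∀ {y : V}, y ∈ H.verts → BlockedFor G K c' (P.getVert (k+1)) y →
      BlockedFor G H c v y := by
    intro y hy hb q hq hqe hqn col hcol
    have hqn' : (q.edges.map c').Nodup := by rw [hqmap q hqe]; exact hqn
    obtain ⟨R, hR1, hR2, hR3, hR4⟩ := hExtV' q hy hq hqe hqn' (k+1) le_rfl (by omega)
    have := hb R hR1 hR2 hR4 col (himC col hcol)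
    rw [hR3, List.mem_append] at this
    rcases this with h | h
    · exact absurd hcol (hWnotC (k+1) N col (by omega) (by omega) h)
    · rwa [hqmap q hqe] at h
  constructor
  · -- rainbow connecting
    have connHH : ∀ x ∈ H.verts, ∀ y ∈ H.verts, ∃ p : G.Walk x y, p.IsPath ∧
        (∀ e ∈ p.edges, e ∈ K.edgeSet) ∧ (p.edges.map c').Nodup := by
      intro x hx y hy
      obtain ⟨q, h1, h2, h3, _⟩ := hold x hx y hy
      exact ⟨q, h1, fun e he => hHK e (h2 e he), h3⟩
    have connHP : ∀ x ∈ H.verts, ∀ j, 0 < j → j ≤ 2*k → ∃ p : G.Walk x (P.getVert j),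
        p.IsPath ∧ (∀ e ∈ p.edges, e ∈ K.edgeSet) ∧ (p.edges.map c').Nodup := by
      intro x hx j hj1 hj2
      by_cases hjk : j ≤ k
      · obtain ⟨q, h1, h2, h3, _⟩ := hold x hx u huH
        obtain ⟨R, hR1, hR2, _, hR4⟩ := hExtU q h1 h2 h3 j hjk
        exact ⟨R, hR1, hR2, hR4⟩
      · obtain ⟨q, h1, h2, h3, _⟩ := hold x hx v hvH
        obtain ⟨R, hR1, hR2, _, hR4⟩ := hExtV q h1 h2 h3 j (by omega) (by omega)
        exact ⟨R, hR1, hR2, hR4⟩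
    have connPP : ∀ i j, 0 < i → j ≤ 2*k → i < j → ∃ p : G.Walk (P.getVert i) (P.getVert j),
        p.IsPath ∧ (∀ e ∈ p.edges, e ∈ K.edgeSet) ∧ (p.edges.map c').Nodup := by
      intro i j hi1 hj2 hij
      by_cases hshort : j ≤ i + (k+1)
      · obtain ⟨R, hR1, hR2, hR3, _⟩ := hmid i j (by omega) (by omega)
        exact ⟨R, hR1, hR2, by rw [hR3]; exact hWnodup i j (by omega) (by omega)⟩
      · obtain ⟨q, h1, h2, h3, _⟩ := hold u huH v hvH
        obtain ⟨R, hR1, hR2, _, hR4⟩ := hTriple q h1 h2 h3 i j (by omega) (by omega)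
        exact ⟨R, hR1, hR2, hR4⟩
    have hrev : ∀ {x y : V}, (∃ p : G.Walk x y, p.IsPath ∧
        (∀ e ∈ p.edges, e ∈ K.edgeSet) ∧ (p.edges.map c').Nodup) →
        ∃ p : G.Walk y x, p.IsPath ∧ (∀ e ∈ p.edges, e ∈ K.edgeSet) ∧
          (p.edges.map c').Nodup := by
      rintro x y ⟨p, h1, h2, h3⟩
      refine ⟨p.reverse, h1.reverse, ?_, ?_⟩
      · intro e he
        rw [SimpleGraph.Walk.edges_reverse, List.mem_reverse] at he
        exact h2 e he
      · rw [SimpleGraph.Walk.edges_reverse, List.map_reverse]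
        exact List.nodup_reverse.mpr h3
    intro x hx y hy
    rcases hcase x hx with hxH | ⟨i, hi1, hi2, rfl⟩
    · rcases hcase y hy with hyH | ⟨j, hj1, hj2, rfl⟩
      · exact connHH x hxH y hyH
      · exact connHP x hxH j hj1 hj2
    · rcases hcase y hy with hyH | ⟨j, hj1, hj2, rfl⟩
      · exact hrev (connHP y hyH i hi1 hi2)
      · rcases lt_trichotomy i j with h | h | h
        · exact connPP i j hi1 hj2 h
        · subst h
          exact ⟨SimpleGraph.Walk.nil, SimpleGraph.Walk.IsPath.nil, by simp, by simp⟩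
        · exact hrev (connPP j i hj1 hi2 h)
  · -- safety
    intro x hxK
    rcases hcase x hxK with hxH | ⟨i, hi1, hi2, rfl⟩
    · by_cases hk0 : k = 0
      · -- no new colours: blockedness transfers to the old colouring
        subst hk0
        apply Set.Subsingleton.anti (hsafe x hxH)
        rintro y ⟨hyK, hyB⟩
        have hyH : y ∈ H.verts := by
          rcases hcase y hyK with h | ⟨j, hj1, hj2, _⟩
          · exact h
          · omega
        refine ⟨hyH, ?_⟩
        intro q hq hqe hqn col hcol
        have hqn' : (q.edges.map c').Nodup := by rw [hqmap q hqe]; exact hqn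
        have := hyB q hq (fun e he => hHK e (hqe e he)) hqn' col (himC col hcol)
        rwa [hqmap q hqe] at this
      · -- k ≥ 1 : only the two middle vertices of P can be blocked for x ∈ H
        have hkey : ∀ y, y ∈ {y | y ∈ K.verts ∧ BlockedFor G K c' x y} →
            y = P.getVert k ∨ y = P.getVert (k+1) := by
          rintro y ⟨hyK, hyB⟩
          rcases hcase y hyK with hyH | ⟨j, hj1, hj2, rfl⟩
          · exfalso
            obtain ⟨q, h1, h2, h3, _⟩ := hold x hxH y hyH
            have := hyB q h1 (fun e he => hHK e (h2 e he)) h3 (f 0) (himF 0 (by omega))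
            exact hfnotC 0 (by omega) (by omega) (hqC q h2 (f 0) this)
          · by_cases hjk : j < k
            · exfalso
              obtain ⟨q, h1, h2, h3, _⟩ := hold x hxH u huH
              obtain ⟨R, hR1, hR2, hR3, hR4⟩ := hExtU q h1 h2 h3 j (by omega)
              have := hyB R hR1 hR2 hR4 (f (k-1)) (himF (k-1) (by omega))
              rw [hR3, List.mem_append] at this
              rcases this with h | h
              · exact hfnotC (k-1) (by omega) (by omega) (hqC q h2 (f (k-1)) h)
              · obtain ⟨m, hm1, hm2, hm3⟩ := (hWmem 0 j (f (k-1))).mp h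
                have := hcoll m (k-1) (by omega) (by omega) hm3
                omega
            · by_cases hjk2 : j = k
              · exact Or.inl (by rw [hjk2])
              · by_cases hjk3 : j = k+1
                · exact Or.inr (by rw [hjk3])
                · exfalso
                  obtain ⟨q, h1, h2, h3, _⟩ := hold x hxH v hvH
                  obtain ⟨R, hR1, hR2, hR3, hR4⟩ := hExtV q h1 h2 h3 j (by omega) (by omega)
                  have := hyB R hR1 hR2 hR4 (f 0) (himF 0 (by omega))
                  rw [hR3, List.mem_append] at this
                  rcases this with h | h
                  · exact hfnotC 0 (by omega) (by omega) (hqC q h2 (f 0) h)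
                  · rw [List.mem_reverse] at h
                    obtain ⟨m, hm1, hm2, hm3⟩ := (hWmem j N (f 0)).mp h
                    have := hcoll 0 m (by omega) (by omega) hm3.symm
                    omega
        intro y1 hy1 y2 hy2
        rcases hkey y1 hy1 with h1 | h1 <;> rcases hkey y2 hy2 with h2 | h2
        · rw [h1, h2]
        · exfalso
          have bu : BlockedFor G H c x u := blockU (h1 ▸ hy1.2)
          have bv : BlockedFor G H c x v := blockV (h2 ▸ hy2.2)
          exact huv (hsafe x hxH ⟨huH, bu⟩ ⟨hvH, bv⟩)
        · exfalso
          have bu : BlockedFor G H c x u := blockU (h2 ▸ hy2.2)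
          have bv : BlockedFor G H c x v := blockV (h1 ▸ hy1.2)
          exact huv (hsafe x hxH ⟨huH, bu⟩ ⟨hvH, bv⟩)
        · rw [h1, h2]
    · -- x is an internal vertex of P
      by_cases hik : i = k
      · subst hik
        apply Set.Subsingleton.anti (hsafe u huH)
        rintro y ⟨hyK, hyB⟩
        rcases hcase y hyK with hyH | ⟨j, hj1, hj2, rfl⟩
        · exact ⟨hyH, blockU' hyH hyB⟩
        · exfalso
          by_cases hji : j = i
          · subst hji
            exact hNotSelf _ hyB
          · exact hIntNotBlocked i j hi1 hi2 hj1 hj2 (fun h => hji h.symm) hyB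
      · by_cases hik2 : i = k+1
        · subst hik2
          apply Set.Subsingleton.anti (hsafe v hvH)
          rintro y ⟨hyK, hyB⟩
          rcases hcase y hyK with hyH | ⟨j, hj1, hj2, rfl⟩
          · exact ⟨hyH, blockV' hyH hyB⟩
          · exfalso
            by_cases hji : j = k+1
            · subst hji
              exact hNotSelf _ hyB
            · exact hIntNotBlocked (k+1) j hi1 hi2 hj1 hj2 (fun h => hji h.symm) hyB
        · -- x = pv i with i ∉ {k, k+1} : nothing is blocked for x
          have hempty : ∀ y, y ∉ {y | y ∈ K.verts ∧ BlockedFor G K c' (P.getVert i) y} := by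
            rintro y ⟨hyK, hyB⟩
            rcases hcase y hyK with hyH | ⟨j, hj1, hj2, rfl⟩
            · by_cases hik3 : i < k
              · obtain ⟨q, h1, h2, h3, _⟩ := hold u huH y hyH
                obtain ⟨R, hR1, hR2, hR3, hR4, _⟩ := hExtU' q hyH h1 h2 h3 i (by omega)
                have := hyB R hR1 hR2 hR4 (f (k-1)) (himF (k-1) (by omega))
                rw [hR3, List.mem_append] at this
                rcases this with h | h
                · rw [List.mem_reverse] at h
                  obtain ⟨m, hm1, hm2, hm3⟩ := (hWmem 0 i (f (k-1))).mp h
                  have := hcoll m (k-1) (by omega) (by omega) hm3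
                  omega
                · exact hfnotC (k-1) (by omega) (by omega) (hqC q h2 (f (k-1)) h)
              · -- here k + 1 < i
                obtain ⟨q, h1, h2, h3, _⟩ := hold v hvH y hyH
                obtain ⟨R, hR1, hR2, hR3, hR4⟩ := hExtV' q hyH h1 h2 h3 i (by omega) (by omega)
                have := hyB R hR1 hR2 hR4 (f (k+1)) (himF (k+1) (by omega))
                rw [hR3, List.mem_append] at this
                rcases this with h | h
                · obtain ⟨m, hm1, hm2, hm3⟩ := (hWmem i N (f (k+1))).mp h
                  have := hcoll (k+1) m (by omega) (by omega) hm3.symm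
                  omega
                · exact hfnotC (k+1) (by omega) (by omega) (hqC q h2 (f (k+1)) h)
            · by_cases hji : j = i
              · subst hji
                exact hNotSelf _ hyB
              · exact hIntNotBlocked i j hi1 hi2 hj1 hj2 (fun h => hji h.symm) hyB
          intro y1 hy1 y2 hy2
          exact absurd hy1 (hempty y1)
end

section
/- The colouring of the even cycle C_{2k} (k ≥ 2) assigning the colours 1, 2, …, k, 1, 2, …, k to its edges in cyclic order is safely rainbow-connecting. -/
open SimpleGraph

section

open Fin.NatCast Fin.CommRing

variable {k : ℕ}

private lemma adjSucc (hk : 2 ≤ k) [NeZero (2*k)] (j : Fin (2*k)) :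
    (cycleGraph (2*k)).Adj j (j+1) := by
  rw [cycleGraph_adj']
  right
  rw [add_sub_cancel_left, Fin.val_one', Nat.mod_eq_of_lt (by omega)]

private def walkF (hk : 2 ≤ k) [NeZero (2*k)] : (x : Fin (2*k)) → (d : ℕ) →
    (cycleGraph (2*k)).Walk x (x + (d : Fin (2*k)))
  | x, 0 => Walk.nil.copy rfl (by simp)
  | x, d+1 => (Walk.cons (adjSucc hk x) (walkF hk (x+1) d)).copy rfl (by push_cast; ring)

private lemma walkF_edges (hk : 2 ≤ k) [NeZero (2*k)] (x : Fin (2*k)) (d : ℕ) :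
    (walkF hk x d).edges
      = (List.range d).map (fun i : ℕ => s(x + (i : Fin (2*k)), x + (i : Fin (2*k)) + 1)) := by
  induction d generalizing x with
  | zero => rw [walkF]; simp [List.range_succ]
  | succ d ih =>
    rw [walkF, Walk.edges_copy, Walk.edges_cons, ih, List.range_succ_eq_map]
    simp only [List.map_cons, List.map_map]
    congr 1
    · norm_num
    · apply List.map_congr_left
      intro i _
      simp only [Function.comp, Nat.succ_eq_add_one]
      push_cast
      ring_nf

private lemma walkF_support (hk : 2 ≤ k) [NeZero (2*k)] (x : Fin (2*k)) (d : ℕ) :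
    (walkF hk x d).support = (List.range (d+1)).map (fun i : ℕ => x + (i : Fin (2*k))) := by
  induction d generalizing x with
  | zero => rw [walkF]; simp [List.range_succ]
  | succ d ih =>
    rw [walkF, Walk.support_copy, Walk.support_cons, ih, List.range_succ_eq_map (n := d+1)]
    simp only [List.map_cons, List.map_map]
    congr 1
    · norm_num
    · apply List.map_congr_left
      intro i _
      simp only [Function.comp, Nat.succ_eq_add_one]
      push_cast
      ring_nf

private lemma walkF_isPath (hk : 2 ≤ k) [NeZero (2*k)] (x : Fin (2*k)) (d : ℕ)
    (hd : d < 2*k) : (walkF hk x d).IsPath := by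
  rw [Walk.isPath_def, walkF_support]
  refine List.Nodup.map_on ?_ (List.nodup_range (n := _))
  intro i hi j hj hij
  rw [List.mem_range] at hi hj
  have := add_left_cancel hij
  have h2 : (i : Fin (2*k)).val = (j : Fin (2*k)).val := by rw [this]
  rw [Fin.val_natCast, Fin.val_natCast, Nat.mod_eq_of_lt (by omega), Nat.mod_eq_of_lt (by omega)] at h2
  exact h2

private lemma walkF_colors (hk : 2 ≤ k) [NeZero (2*k)] (c : Sym2 (Fin (2 * k)) → ℕ)
    (hc : ∀ i : Fin (2 * k), c s(i, i + ⟨1, by linarith⟩) = (i : ℕ) % k + 1)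
    (x : Fin (2*k)) (d : ℕ) :
    (walkF hk x d).edges.map c = (List.range d).map (fun i : ℕ => (x.val + i) % k + 1) := by
  have hone : (⟨1, by omega⟩ : Fin (2*k)) = 1 := by
    rw [Fin.ext_iff, Fin.val_one', Nat.mod_eq_of_lt (by omega)]
  rw [walkF_edges, List.map_map]
  apply List.map_congr_left
  intro i hi
  rw [List.mem_range] at hi
  have := hc (x + (i : Fin (2*k)))
  rw [hone] at this
  simp only [Function.comp]
  rw [this]
  have hval : (x + (i : Fin (2*k))).val = (x.val + i) % (2*k) := by
    simp [Fin.add_def, Fin.val_natCast, Nat.add_mod_mod]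
  rw [hval, Nat.mod_mod_of_dvd _ (dvd_mul_left k 2)]

private lemma colors_nodup (hk : 2 ≤ k) (a d : ℕ) (hd : d ≤ k) :
    ((List.range d).map (fun i : ℕ => (a + i) % k + 1)).Nodup := by
  refine List.Nodup.map_on ?_ (List.nodup_range (n := _))
  intro i hi j hj hij
  rw [List.mem_range] at hi hj
  have h : (a + i) % k = (a + j) % k := by omega
  have := Nat.ModEq.add_left_cancel' a h
  rw [Nat.ModEq, Nat.mod_eq_of_lt (by omega), Nat.mod_eq_of_lt (by omega)] at this
  exact this

private lemma colors_missing (hk : 2 ≤ k) (a d : ℕ) (hd : d < k) :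
    (a + d) % k + 1 ∉ (List.range d).map (fun i : ℕ => (a + i) % k + 1) := by
  intro hmem
  rw [List.mem_map] at hmem
  obtain ⟨i, hi, h⟩ := hmem
  rw [List.mem_range] at hi
  have h2 : (a + i) % k = (a + d) % k := by omega
  have := Nat.ModEq.add_left_cancel' a h2
  rw [Nat.ModEq, Nat.mod_eq_of_lt (by omega), Nat.mod_eq_of_lt (by omega)] at this
  omega

end

/-- The colouring of the even cycle `C_{2k}` (`k ≥ 2`) assigning colours
`1, 2, …, k, 1, 2, …, k` to its edges in cyclic order is safely rainbow-connecting. -/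
theorem even_cycle_colouring_safe (k : ℕ) (hk : 2 ≤ k)
    (c : Sym2 (Fin (2 * k)) → ℕ)
    (hc : ∀ i : Fin (2 * k), c s(i, i + ⟨1, by omega⟩) = (i : ℕ) % k + 1) :
    SafelyRainbowConnecting (SimpleGraph.cycleGraph (2 * k))
      (⊤ : (SimpleGraph.cycleGraph (2 * k)).Subgraph) c := by
  haveI : NeZero (2 * k) := ⟨by omega⟩
  open Fin.NatCast Fin.CommRing in
  have hKedge : (⊤ : (cycleGraph (2*k)).Subgraph).edgeSet = (cycleGraph (2*k)).edgeSet :=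
    Subgraph.edgeSet_top
  -- a colour in the image, for any residue determined by a vertex value
  have himg : ∀ j : Fin (2*k), (j.val % k + 1) ∈ c '' (⊤ : (cycleGraph (2*k)).Subgraph).edgeSet := by
    intro j
    refine ⟨s(j, j + 1), ?_, ?_⟩
    · rw [hKedge, mem_edgeSet]; exact adjSucc hk j
    · have hone : (⟨1, by omega⟩ : Fin (2*k)) = 1 := by
        rw [Fin.ext_iff, Fin.val_one', Nat.mod_eq_of_lt (by omega)]
      have := hc j; rwa [hone] at this
  constructor
  · -- rainbow connecting
    intro u _ v _
    set d := (v - u).val with hd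
    have hend : u + ((d : ℕ) : Fin (2*k)) = v := by
      rw [hd, Fin.cast_val_eq_self]; ring
    rcases le_or_gt d k with hle | hgt
    · refine ⟨(walkF hk u d).copy rfl hend, ?_, ?_, ?_⟩
      · rw [Walk.isPath_copy]; exact walkF_isPath hk u d (by have := (v-u).isLt; omega)
      · intro e he; rw [hKedge]; exact Walk.edges_subset_edgeSet _ he
      · rw [Walk.edges_copy, walkF_colors hk c hc]; exact colors_nodup hk u.val d hle
    · have hne : u ≠ v := by
        intro h; rw [h] at hd; simp at hd; omega
      have hsum : (v - u).val + (u - v).val = 2*k := by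
        have h1 : u - v = -(v - u) := by ring
        have h2 : v - u ≠ 0 := sub_ne_zero.mpr (Ne.symm hne)
        have h3 : (v-u).val ≠ 0 := by rwa [Ne, Fin.val_eq_zero_iff]
        have h4 := (v-u).isLt
        rw [h1, Fin.coe_neg, Nat.mod_eq_of_lt (by omega)]
        omega
      set d' := (u - v).val with hd'
      have hend' : v + ((d' : ℕ) : Fin (2*k)) = u := by
        rw [hd', Fin.cast_val_eq_self]; ring
      refine ⟨((walkF hk v d').copy rfl hend').reverse, ?_, ?_, ?_⟩
      · apply Walk.IsPath.reverse
        rw [Walk.isPath_copy]; exact walkF_isPath hk v d' (by omega)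
      · intro e he; rw [hKedge]; exact Walk.edges_subset_edgeSet _ he
      · rw [Walk.edges_reverse, List.map_reverse, List.nodup_reverse, Walk.edges_copy,
          walkF_colors hk c hc]
        exact colors_nodup hk v.val d' (by omega)
  · -- safe
    intro x _
    have claim : ∀ y, BlockedFor (cycleGraph (2*k)) ⊤ c x y → y = x + ((k : ℕ) : Fin (2*k)) := by
      intro y hb
      set d := (y - x).val with hd
      have hend : x + ((d : ℕ) : Fin (2*k)) = y := by
        rw [hd, Fin.cast_val_eq_self]; ring
      rcases lt_trichotomy d k with hlt | heq | hgt
      · -- short forward path contradicts blockedness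
        exfalso
        have hpath := walkF_isPath hk x d (by omega)
        have hnodup := colors_nodup hk x.val d hlt.le
        have := hb ((walkF hk x d).copy rfl hend)
          (by rw [Walk.isPath_copy]; exact hpath)
          (by intro e he; rw [hKedge]; exact Walk.edges_subset_edgeSet _ he)
          (by rw [Walk.edges_copy, walkF_colors hk c hc]; exact hnodup)
          ((x.val + d) % k + 1)
          (by
            have h2 := himg (x + ((d : ℕ) : Fin (2*k)))
            have hval : (x + ((d : ℕ) : Fin (2*k))).val = (x.val + d) % (2*k) := by
              simp [Fin.add_def, Fin.val_natCast, Nat.add_mod_mod]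
            rwa [hval, Nat.mod_mod_of_dvd _ (dvd_mul_left k 2)] at h2)
        rw [Walk.edges_copy, walkF_colors hk c hc] at this
        exact colors_missing hk x.val d hlt this
      · rw [← hend, heq]
      · -- short backward path contradicts blockedness
        exfalso
        have hne : x ≠ y := by
          intro h; rw [h] at hd; simp at hd; omega
        have hsum : (y - x).val + (x - y).val = 2*k := by
          have h1 : x - y = -(y - x) := by ring
          have h2 : y - x ≠ 0 := sub_ne_zero.mpr (Ne.symm hne)
          have h3 : (y-x).val ≠ 0 := by rwa [Ne, Fin.val_eq_zero_iff]
          have h4 := (y-x).isLt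
          rw [h1, Fin.coe_neg, Nat.mod_eq_of_lt (by omega)]
          omega
        set d' := (x - y).val with hd'
        have hend' : y + ((d' : ℕ) : Fin (2*k)) = x := by
          rw [hd', Fin.cast_val_eq_self]; ring
        have hd'k : d' < k := by omega
        have hpath := walkF_isPath hk y d' (by omega)
        have hnodup := colors_nodup hk y.val d' hd'k.le
        have := hb (((walkF hk y d').copy rfl hend').reverse)
          (by apply Walk.IsPath.reverse; rw [Walk.isPath_copy]; exact hpath)
          (by intro e he; rw [hKedge]; exact Walk.edges_subset_edgeSet _ he)
          (by rw [Walk.edges_reverse, List.map_reverse, List.nodup_reverse, Walk.edges_copy,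
              walkF_colors hk c hc]; exact hnodup)
          ((y.val + d') % k + 1)
          (by
            have h2 := himg (y + ((d' : ℕ) : Fin (2*k)))
            have hval : (y + ((d' : ℕ) : Fin (2*k))).val = (y.val + d') % (2*k) := by
              simp [Fin.add_def, Fin.val_natCast, Nat.add_mod_mod]
            rwa [hval, Nat.mod_mod_of_dvd _ (dvd_mul_left k 2)] at h2)
        rw [Walk.edges_reverse, List.map_reverse, List.mem_reverse, Walk.edges_copy,
          walkF_colors hk c hc] at this
        exact colors_missing hk y.val d' hd'k this
    intro y₁ hy₁ y₂ hy₂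
    rw [claim y₁ hy₁.2, claim y₂ hy₂.2]
end
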